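/- arXiv:math/0506007 — 3 statements merged into one kernel-verified Lean document; each statement's English description precedes it below -/
import Mathlib

section
/- Let p be an odd prime and G = V ⋊ ⟨c⟩ be the quotient of C₂ ≀ C_p by its center, with c of order p. If X = {c, w₂, …, w_n} with w₂,…,w_n ∈ V generates G, then every v ∈ V is a word of length at most 3(p−1) in X (inverses allowed), in which the elements w₂,…,w_n occur at most p−1 times in total. -/
/-- The base group of the wreath product `C₂ ≀ C_p`, written multiplicatively. -/
abbrev WreathBase (p : ℕ) := Multiplicative (ZMod p → ZMod 2)

/-- The shift automorphism of the base group, by `k`. -/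
def shiftAddAut (p : ℕ) (k : ZMod p) : AddAut (ZMod p → ZMod 2) where
  toFun f i := f (i + k)
  invFun f i := f (i - k)
  left_inv f := by funext i; simp
  right_inv f := by funext i; simp
  map_add' f g := rfl

/-- The action of `C_p` on the base group by cyclic shifts. -/
def wreathShift (p : ℕ) : Multiplicative (ZMod p) →* MulAut (WreathBase p) where
  toFun k := AddEquiv.toMultiplicative (shiftAddAut p k.toAdd)
  map_one' := by
    ext f
    simp [shiftAddAut, AddEquiv.toMultiplicative]
  map_mul' a b := by
    ext f
    simp only [shiftAddAut, AddEquiv.toMultiplicative]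
    exact congrArg _ (add_assoc ..).symm

/-- The wreath product `C₂ ≀ C_p`. -/
abbrev Wreath (p : ℕ) := WreathBase p ⋊[wreathShift p] Multiplicative (ZMod p)

/-- The quotient `G = W / Z(W)` of the wreath product by its center. -/
abbrev WreathQuot (p : ℕ) := Wreath p ⧸ Subgroup.center (Wreath p)

/-- The canonical generator `c`, the image in `G` of the generator of `C_p`. -/
def cElem (p : ℕ) : WreathQuot p :=
  QuotientGroup.mk' _ (SemidirectProduct.inr (Multiplicative.ofAdd (1 : ZMod p)))

/-- `V`, the image in `G` of the base group `C₂^p`. -/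
def Vsub (p : ℕ) : Subgroup (WreathQuot p) :=
  Subgroup.map (QuotientGroup.mk' _) (SemidirectProduct.inl (φ := wreathShift p)).range

namespace ShortWordsAux

open SemidirectProduct Multiplicative

variable (p : ℕ)

/-- The embedding of the base group into the quotient. -/
def qhom : Multiplicative (ZMod p → ZMod 2) →* WreathQuot p :=
  (QuotientGroup.mk' _).comp (SemidirectProduct.inl (φ := wreathShift p))

lemma center_le :
    Subgroup.center (Wreath p) ≤
      (rightHom : Wreath p →* Multiplicative (ZMod p)).ker := by
  intro w hw
  rw [Subgroup.mem_center_iff] at hw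
  have h := hw (inl (Multiplicative.ofAdd (Pi.single (0 : ZMod p) (1 : ZMod 2))))
  have h1 := congrArg SemidirectProduct.left h
  simp only [mul_left, left_inl, right_inl, map_one, MulAut.one_apply] at h1
  have h2 : (wreathShift p w.right) (Multiplicative.ofAdd (Pi.single (0 : ZMod p) (1 : ZMod 2)))
      = Multiplicative.ofAdd (Pi.single (0 : ZMod p) (1 : ZMod 2)) := by
    exact mul_left_cancel (h1.symm.trans (mul_comm _ _))
  have h3 : shiftAddAut p (toAdd w.right) (Pi.single (0 : ZMod p) (1 : ZMod 2))
      = Pi.single (0 : ZMod p) (1 : ZMod 2) := congrArg Multiplicative.toAdd h2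
  have h4 := congrFun h3 0
  simp only [shiftAddAut, AddEquiv.coe_mk, Equiv.coe_fn_mk, zero_add, Pi.single_eq_same] at h4
  by_cases hz : w.right.toAdd = 0
  · have : w.right = 1 := hz
    simpa [MonoidHom.mem_ker, rightHom] using this
  · rw [Pi.single_eq_of_ne hz] at h4
    exact absurd h4 (by decide)

/-- The projection `G → C_p`. -/
def phom : WreathQuot p →* Multiplicative (ZMod p) :=
  QuotientGroup.lift _ rightHom (center_le p)

@[simp] lemma phom_q (u : ZMod p → ZMod 2) : phom p (qhom p (ofAdd u)) = 1 := by
  simp [phom, qhom, QuotientGroup.lift_mk']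

@[simp] lemma phom_c : phom p (cElem p) = ofAdd (1 : ZMod p) := by
  simp [phom, cElem, QuotientGroup.lift_mk']

end ShortWordsAux
namespace ShortWordsAux

open SemidirectProduct Multiplicative

variable (p : ℕ)

lemma Vsub_eq_ker : Vsub p = (phom p).ker := by
  ext x
  constructor
  · rintro ⟨w, ⟨u, rfl⟩, rfl⟩
    simp [MonoidHom.mem_ker, phom, QuotientGroup.lift_mk']
  · intro hx
    obtain ⟨w, rfl⟩ := QuotientGroup.mk'_surjective (Subgroup.center (Wreath p)) x
    have hr : w.right = 1 := by
      simpa [MonoidHom.mem_ker, phom, QuotientGroup.lift_mk', rightHom] using hx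
    exact ⟨w, ⟨w.left, by ext <;> simp [hr]⟩, rfl⟩

lemma Vsub_eq_range : Vsub p = (qhom p).range := by
  ext x
  simp [Vsub, qhom, Subgroup.mem_map, MonoidHom.mem_range]

lemma Vsub_comm {x y : WreathQuot p} (hx : x ∈ Vsub p) (hy : y ∈ Vsub p) :
    Commute x y := by
  rw [Vsub_eq_range] at hx hy
  obtain ⟨a, rfl⟩ := hx
  obtain ⟨b, rfl⟩ := hy
  rw [Commute, SemiconjBy, ← map_mul, ← map_mul, mul_comm]

lemma c_pow_p [NeZero p] : cElem p ^ p = 1 := by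
  have : (Multiplicative.ofAdd (1 : ZMod p)) ^ p = 1 := by
    rw [← ofAdd_zero]
    rw [show ((Multiplicative.ofAdd (1 : ZMod p)) ^ p) = Multiplicative.ofAdd (p • (1 : ZMod p))
      from rfl]
    simp [nsmul_eq_mul]
  rw [cElem, ← map_pow, ← map_pow, this, map_one, map_one]

lemma c_pow_val [NeZero p] (k : ZMod p) :
    (QuotientGroup.mk' (Subgroup.center (Wreath p))) (inr (φ := wreathShift p) (ofAdd k))
      = cElem p ^ k.val := by
  rw [cElem, ← map_pow, ← map_pow]
  congr 1
  rw [show ((Multiplicative.ofAdd (1 : ZMod p)) ^ k.val)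
      = Multiplicative.ofAdd ((k.val : ℕ) • (1 : ZMod p)) from rfl]
  simp [nsmul_eq_mul, ZMod.natCast_val, ZMod.cast_id]

lemma conj_q [NeZero p] (k : ZMod p) (u : ZMod p → ZMod 2) :
    cElem p ^ k.val * qhom p (ofAdd u) * (cElem p ^ k.val)⁻¹
      = qhom p (ofAdd (shiftAddAut p k u)) := by
  have h := inl_aut (φ := wreathShift p) (ofAdd k) (ofAdd u)
  rw [map_inv] at h
  have h2 := congrArg (QuotientGroup.mk' (Subgroup.center (Wreath p))) h
  rw [map_mul, map_mul, map_inv, c_pow_val] at h2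
  have h3 : (wreathShift p (ofAdd k)) (ofAdd u) = ofAdd (shiftAddAut p k u) := rfl
  rw [h3] at h2
  exact h2.symm

lemma q_const_one : qhom p (ofAdd (fun _ => (1 : ZMod 2))) = 1 := by
  rw [qhom, MonoidHom.comp_apply]
  rw [QuotientGroup.mk'_apply, QuotientGroup.eq_one_iff]
  rw [Subgroup.mem_center_iff]
  intro g
  ext : 1
  · show g.left * (wreathShift p g.right) (ofAdd fun _ => (1:ZMod 2))
        = (ofAdd fun _ => (1:ZMod 2)) * ((wreathShift p 1) g.left)
    have : (wreathShift p g.right) (ofAdd fun _ => (1:ZMod 2)) = (ofAdd fun _ => (1:ZMod 2)) :=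
      rfl
    rw [this, map_one, MulAut.one_apply, mul_comm]
  · show g.right * 1 = 1 * g.right
    rw [mul_one, one_mul]

lemma c_zpow [NeZero p] (j : ℤ) : cElem p ^ j = cElem p ^ (((j : ZMod p)).val) := by
  have hdvd : ((p : ℤ)) ∣ j - ((j : ZMod p).val : ℤ) := by
    rw [← ZMod.intCast_zmod_eq_zero_iff_dvd]
    push_cast
    rw [ZMod.natCast_val, ZMod.cast_id]
    ring
  obtain ⟨m, hm⟩ := hdvd
  have hj : j = ((j : ZMod p).val : ℤ) + p * m := by linarith
  conv_lhs => rw [hj]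
  rw [zpow_add, zpow_natCast, zpow_mul, zpow_natCast, c_pow_p, one_zpow, mul_one]

end ShortWordsAux
namespace ShortWordsAux

open SemidirectProduct Multiplicative

variable (p : ℕ)

lemma flatten_prod_aux {G : Type*} [Group G] (c : G) (seg : ℕ → List G) (n : ℕ) :
    ((List.range n).map (fun r => seg r ++ [c])).flatten.prod
      = ((List.range n).map (fun r => c ^ r * (seg r).prod * (c ^ r)⁻¹)).prod * c ^ n := by
  induction n with
  | zero => simp
  | succ n ih =>
    rw [List.range_succ, List.map_append, List.map_append, List.flatten_append,
        List.prod_append, List.prod_append, ih]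
    simp only [List.map_cons, List.map_nil, List.flatten_cons, List.flatten_nil,
      List.append_nil, List.prod_append, List.prod_cons, List.prod_nil]
    group

lemma list_range_map_sum {M : Type*} [AddCommMonoid M] (f : ℕ → M) (n : ℕ) :
    ((List.range n).map f).sum = ∑ r ∈ Finset.range n, f r := by
  induction n with
  | zero => simp
  | succ n ih => rw [List.range_succ, List.map_append, List.sum_append,
      Finset.sum_range_succ, ih]; simp

end ShortWordsAux
namespace ShortWordsAux

open SemidirectProduct Multiplicative

variable (p : ℕ)

open scoped Classical in
lemma assembly [NeZero p] (S : Set (WreathQuot p))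
    (hc : cElem p ∉ S) (hci : (cElem p)⁻¹ ∉ S)
    {ι : Type*} (A : Finset ι) (kf : ι → ℕ) (sf : ι → WreathQuot p)
    (gf : ι → (ZMod p → ZMod 2))
    (hk : ∀ i ∈ A, kf i < p) (hs : ∀ i ∈ A, sf i ∈ S)
    (hq : ∀ i ∈ A, qhom p (Multiplicative.ofAdd (gf i))
        = cElem p ^ kf i * sf i * (cElem p ^ kf i)⁻¹) :
    ∃ l : List (WreathQuot p),
      (∀ x ∈ l, x = cElem p ∨ x = (cElem p)⁻¹ ∨ x ∈ S ∨ x⁻¹ ∈ S) ∧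
      l.length = A.card + p ∧
      l.countP (fun x => decide (x ∈ S ∨ x⁻¹ ∈ S)) ≤ A.card ∧
      l.prod = qhom p (Multiplicative.ofAdd (∑ i ∈ A, gf i)) := by
  set seg : ℕ → List (WreathQuot p) :=
    fun r => ((A.filter (fun i => kf i = r)).toList).map sf with hseg
  refine ⟨((List.range p).map (fun r => seg r ++ [cElem p])).flatten, ?_, ?_, ?_, ?_⟩
  · intro x hx
    rw [List.mem_flatten] at hx
    obtain ⟨l, hl, hxl⟩ := hx
    rw [List.mem_map] at hl
    obtain ⟨r, -, rfl⟩ := hl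
    rw [List.mem_append] at hxl
    rcases hxl with hxl | hxl
    · rw [hseg, List.mem_map] at hxl
      obtain ⟨i, hi, rfl⟩ := hxl
      rw [Finset.mem_toList, Finset.mem_filter] at hi
      exact Or.inr (Or.inr (Or.inl (hs i hi.1)))
    · rw [List.mem_singleton] at hxl
      exact Or.inl hxl
  · rw [List.length_flatten, List.map_map]
    have : ∀ r : ℕ, ((fun r => (seg r ++ [cElem p]).length) : ℕ → ℕ) r
        = (A.filter (fun i => kf i = r)).card + 1 := by
      intro r
      simp [hseg, List.length_append, Finset.length_toList]
    rw [show (List.length ∘ fun r => seg r ++ [cElem p]) = fun r =>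
      (A.filter (fun i => kf i = r)).card + 1 from funext this]
    rw [list_range_map_sum, Finset.sum_add_distrib, Finset.sum_const, Finset.card_range,
      smul_eq_mul, mul_one]
    congr 1
    exact (Finset.card_eq_sum_card_fiberwise (fun i hi => Finset.mem_range.2 (hk i hi))).symm
  · rw [List.countP_flatten, List.map_map]
    have hb : ∀ r ∈ List.range p,
        ((List.countP (fun x => decide (x ∈ S ∨ x⁻¹ ∈ S)) ∘ fun r => seg r ++ [cElem p]) : ℕ → ℕ) r
          ≤ (A.filter (fun i => kf i = r)).card := by
      intro r _
      have h1 : (List.countP (fun x => decide (x ∈ S ∨ x⁻¹ ∈ S)) (seg r ++ [cElem p]))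
          = List.countP (fun x => decide (x ∈ S ∨ x⁻¹ ∈ S)) (seg r) := by
        rw [List.countP_append]
        have : List.countP (fun x => decide (x ∈ S ∨ x⁻¹ ∈ S)) [cElem p] = 0 := by
          simp only [List.countP_cons, List.countP_nil]
          rw [decide_eq_false (by rw [not_or]; exact ⟨hc, hci⟩)]
          simp
        rw [this, add_zero]
      calc ((List.countP (fun x => decide (x ∈ S ∨ x⁻¹ ∈ S)) ∘ fun r => seg r ++ [cElem p]) : ℕ → ℕ) r
          = List.countP (fun x => decide (x ∈ S ∨ x⁻¹ ∈ S)) (seg r) := h1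
        _ ≤ (seg r).length := List.countP_le_length
        _ = (A.filter (fun i => kf i = r)).card := by
            simp [hseg, Finset.length_toList]
    calc ((List.range p).map
            (List.countP (fun x => decide (x ∈ S ∨ x⁻¹ ∈ S)) ∘ fun r => seg r ++ [cElem p])).sum
        ≤ ((List.range p).map (fun r => (A.filter (fun i => kf i = r)).card)).sum :=
          List.sum_le_sum hb
      _ = ∑ r ∈ Finset.range p, (A.filter (fun i => kf i = r)).card := list_range_map_sum _ _
      _ = A.card := (Finset.card_eq_sum_card_fiberwise
            (fun i hi => Finset.mem_range.2 (hk i hi))).symm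
  · rw [flatten_prod_aux, c_pow_p, mul_one]
    have step1 : ∀ r : ℕ, cElem p ^ r * (seg r).prod * (cElem p ^ r)⁻¹
        = qhom p (ofAdd (∑ i ∈ A.filter (fun i => kf i = r), gf i)) := by
      intro r
      have hconj := map_list_prod (MulAut.conj (cElem p ^ r)).toMonoidHom
        ((A.filter (fun i => kf i = r)).toList.map sf)
      simp only [MulEquiv.coe_toMonoidHom, MulAut.conj_apply, List.map_map] at hconj
      have hmap : ((A.filter (fun i => kf i = r)).toList.map
            (⇑(MulAut.conj (cElem p ^ r)) ∘ sf))
          = ((A.filter (fun i => kf i = r)).toList.map (fun i => qhom p (ofAdd (gf i)))) := by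
        apply List.map_congr_left
        intro i hi
        rw [Finset.mem_toList, Finset.mem_filter] at hi
        simp only [Function.comp_apply, MulAut.conj_apply]
        rw [hq i hi.1, hi.2]
      rw [hmap] at hconj
      have h2 : ((A.filter (fun i => kf i = r)).toList.map (fun i => qhom p (ofAdd (gf i)))).prod
          = qhom p (ofAdd (∑ i ∈ A.filter (fun i => kf i = r), gf i)) := by
        rw [show (fun i => qhom p (ofAdd (gf i))) = qhom p ∘ (fun i => ofAdd (gf i)) from rfl,
          ← List.map_map, ← map_list_prod,
          show (fun i => ofAdd (gf i)) = ofAdd ∘ gf from rfl, ← List.map_map,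
          ← ofAdd_list_prod, Finset.sum_map_toList]
      rw [← h2, ← hconj, hseg]
    simp only [step1]
    rw [show (fun r => qhom p (ofAdd (∑ i ∈ A.filter (fun i => kf i = r), gf i)))
        = qhom p ∘ ofAdd ∘ (fun r => (∑ i ∈ A.filter (fun i => kf i = r), gf i)) from rfl]
    rw [← List.map_map, ← map_list_prod, ← List.map_map, ← ofAdd_list_prod, list_range_map_sum]
    rw [Finset.sum_fiberwise_of_maps_to (fun i hi => Finset.mem_range.2 (hk i hi))]

end ShortWordsAux
namespace ShortWordsAux

open SemidirectProduct Multiplicative Pointwise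

variable (p : ℕ)

lemma extract [Fact p.Prime] (S : Set (WreathQuot p)) (hS : S ⊆ Vsub p)
    (hgen : Subgroup.closure ({cElem p} ∪ S) = ⊤)
    {v : WreathQuot p} (hv : v ∈ Vsub p) :
    ∃ (ι : Type) (A : Finset ι) (kf : ι → ℕ) (sf : ι → WreathQuot p)
      (gf : ι → (ZMod p → ZMod 2)),
      A.card ≤ p - 1 ∧ (∀ i ∈ A, kf i < p) ∧ (∀ i ∈ A, sf i ∈ S) ∧
      (∀ i ∈ A, qhom p (ofAdd (gf i)) = cElem p ^ kf i * sf i * (cElem p ^ kf i)⁻¹) ∧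
      qhom p (ofAdd (∑ i ∈ A, gf i)) = v := by
  classical
  have hp : p.Prime := Fact.out
  haveI : NeZero p := ⟨hp.ne_zero⟩
  -- lifts of elements of S to the base group
  have hlift : ∀ s : WreathQuot p, ∃ u : ZMod p → ZMod 2, s ∈ S → qhom p (ofAdd u) = s := by
    intro s
    by_cases hs : s ∈ S
    · have h := hS hs
      rw [Vsub_eq_range] at h
      obtain ⟨a, ha⟩ := h
      exact ⟨a.toAdd, fun _ => by simpa using ha⟩
    · exact ⟨0, fun h => absurd h hs⟩
  choose lft hlft using hlift
  set c := cElem p with hcdef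
  have hSker : ∀ s ∈ S, phom p s = 1 := by
    intro s hs
    have h := hS hs
    rw [Vsub_eq_ker] at h
    exact h
  set T2 : Set (WreathQuot p) :=
    {x | ∃ (j : ℤ) (s : WreathQuot p), s ∈ S ∧ x = c ^ j * s * c ^ (-j)} with hT2def
  set N : Subgroup (WreathQuot p) := Subgroup.closure T2 with hNdef
  have hT2ker : ∀ x ∈ T2, phom p x = 1 := by
    rintro x ⟨j, s, hs, rfl⟩
    rw [map_mul, map_mul, map_zpow, map_zpow, hSker s hs, mul_one, ← zpow_add, add_neg_cancel,
      zpow_zero]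
  have hNle : N ≤ (phom p).ker := by
    rw [hNdef]
    exact (Subgroup.closure_le _).2 (fun x hx => hT2ker x hx)
  have hNV : ∀ n ∈ N, n ∈ Vsub p := by
    intro n hn
    rw [Vsub_eq_ker]
    exact hNle hn
  -- c normalizes N
  have hmapc : Subgroup.map (MulAut.conj c).toMonoidHom N = N := by
    rw [hNdef, MonoidHom.map_closure]
    congr 1
    ext y
    constructor
    · rintro ⟨x, ⟨j, s, hs, rfl⟩, rfl⟩
      refine ⟨j + 1, s, hs, ?_⟩
      simp only [MulEquiv.coe_toMonoidHom, MulAut.conj_apply]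
      rw [zpow_add, zpow_one, neg_add, zpow_add, zpow_neg c 1, zpow_one]
      group
    · rintro ⟨j, s, hs, rfl⟩
      refine ⟨c ^ (j - 1) * s * c ^ (-(j - 1)), ⟨j - 1, s, hs, rfl⟩, ?_⟩
      simp only [MulEquiv.coe_toMonoidHom, MulAut.conj_apply]
      group
  have hcnorm : c ∈ Subgroup.normalizer (N : Set (WreathQuot p)) := by
    rw [Subgroup.mem_normalizer_iff]
    intro h
    constructor
    · intro hh
      rw [← hmapc]
      exact ⟨h, hh, rfl⟩
    · intro hh
      rw [← hmapc] at hh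
      obtain ⟨y, hy, hyeq⟩ := hh
      simp only [MulEquiv.coe_toMonoidHom, MulAut.conj_apply] at hyeq
      have : y = h := by
        have := mul_right_cancel hyeq
        exact mul_left_cancel this
      rwa [← this]
  have hsnorm : ∀ s ∈ S, s ∈ Subgroup.normalizer (N : Set (WreathQuot p)) := by
    intro s hs
    rw [Subgroup.mem_normalizer_iff]
    intro h
    constructor
    · intro hh
      have hcomm : Commute s h := Vsub_comm p (hS hs) (hNV h hh)
      rw [show s * h * s⁻¹ = h from by rw [hcomm.eq]; group]
      exact hh
    · intro hh
      have hcomm : Commute s (s * h * s⁻¹) := Vsub_comm p (hS hs) (hNV _ hh)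
      have hxx : h = s⁻¹ * ((s * h * s⁻¹) * s) := by group
      rw [← hcomm.eq] at hxx
      have hfin : h = s * h * s⁻¹ := hxx.trans (by group)
      rw [hfin]
      exact hh
  have hnormal : N.Normal := by
    rw [← Subgroup.normalizer_eq_top_iff]
    refine le_antisymm le_top ?_
    rw [← hgen]
    refine (Subgroup.closure_le _).2 ?_
    rintro x (hx | hx)
    · rw [Set.mem_singleton_iff] at hx
      subst hx
      exact hcnorm
    · exact hsnorm x hx
  -- v ∈ N
  have hvN : v ∈ N := by
    have hsub : Subgroup.closure ({c} ∪ S) ≤ N ⊔ Subgroup.zpowers c := by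
      refine (Subgroup.closure_le _).2 ?_
      rintro x (hx | hx)
      · rw [Set.mem_singleton_iff] at hx
        subst hx
        exact Subgroup.mem_sup_right (Subgroup.mem_zpowers c)
      · refine Subgroup.mem_sup_left (Subgroup.subset_closure ?_)
        exact ⟨0, x, hx, by group⟩
    have hvsup : v ∈ N ⊔ Subgroup.zpowers c := by
      refine hsub ?_
      rw [hgen]
      trivial
    have hset := Subgroup.normal_mul N (Subgroup.zpowers c)
    have hvset : v ∈ (N : Set (WreathQuot p)) * (Subgroup.zpowers c : Set (WreathQuot p)) := by
      rw [← hset]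
      exact hvsup
    obtain ⟨n, hn, z, hz, hnz⟩ := hvset
    have hnz' : n * z = v := hnz
    obtain ⟨j, hj⟩ := (Subgroup.mem_zpowers_iff).1 hz
    have hphv : phom p v = 1 := by
      have h := hv
      rw [Vsub_eq_ker] at h
      exact h
    have hphn : phom p n = 1 := hNle hn
    have hphc : phom p c ^ j = 1 := by
      have h1 : phom p v = phom p n * phom p c ^ j := by
        rw [← map_zpow, ← map_mul, hj, hnz']
      rw [hphv, hphn, one_mul] at h1
      exact h1.symm
    have hj0 : ((j : ZMod p)) = 0 := by
      have h2 : (ofAdd (1 : ZMod p)) ^ j = 1 := by rw [← phom_c]; exact hphc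
      have h3 : j • (1 : ZMod p) = 0 := by
        have := congrArg Multiplicative.toAdd h2
        simpa using this
      rwa [zsmul_eq_mul, mul_one] at h3
    have hcj : c ^ j = 1 := by
      rw [hcdef, c_zpow p j, ← hcdef, hj0]
      simp [ZMod.val_zero]
    rw [← hnz', ← hj, hcj, mul_one]
    exact hn
  -- push into the base group
  set Tset : Set (ZMod p → ZMod 2) :=
    {x | ∃ (k : ZMod p) (s : WreathQuot p), s ∈ S ∧ x = shiftAddAut p k (lft s)} with hTsetdef
  set Mset : Set (Multiplicative (ZMod p → ZMod 2)) := ofAdd '' Tset with hMsetdef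
  have hT2sub : T2 ⊆ ↑(Subgroup.map (qhom p) (Subgroup.closure Mset)) := by
    rintro x ⟨j, s, hs, rfl⟩
    have hkval : c ^ j = c ^ ((j : ZMod p)).val := by rw [hcdef, c_zpow p j]
    have hconj := conj_q p ((j : ZMod p)) (lft s)
    rw [hlft s hs] at hconj
    refine ⟨ofAdd (shiftAddAut p ((j : ZMod p)) (lft s)),
      Subgroup.subset_closure ⟨_, ⟨(j : ZMod p), s, hs, rfl⟩, rfl⟩, ?_⟩
    rw [← hcdef] at hconj
    rw [zpow_neg, hkval]
    exact hconj.symm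
  have hvmap : v ∈ Subgroup.map (qhom p) (Subgroup.closure Mset) := by
    have : N ≤ Subgroup.map (qhom p) (Subgroup.closure Mset) := by
      rw [hNdef]
      exact (Subgroup.closure_le _).2 hT2sub
    exact this hvN
  obtain ⟨u, hu, huv⟩ := hvmap
  have huspan : u.toAdd ∈ Submodule.span (ZMod 2) Tset := by
    refine Subgroup.closure_induction ?_ ?_ ?_ ?_ hu
    · rintro x ⟨t, ht, rfl⟩
      exact Submodule.subset_span ht
    · exact Submodule.zero_mem _
    · intro x y hx hy hx' hy'
      exact Submodule.add_mem _ hx' hy'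
    · intro x hx hx'
      exact Submodule.neg_mem _ hx'
  -- linear algebra in the quotient by the constants
  set K1 : Submodule (ZMod 2) (ZMod p → ZMod 2) :=
    Submodule.span (ZMod 2) {(fun _ => 1 : ZMod p → ZMod 2)} with hK1def
  set π1 := K1.mkQ with hπ1def
  have hones : (fun _ => (1 : ZMod 2)) ≠ (0 : ZMod p → ZMod 2) := by
    intro h
    have := congrFun h 0
    simp at this
  have hrankU : Module.finrank (ZMod 2) (ZMod p → ZMod 2) = p := by
    rw [Module.finrank_fintype_fun_eq_card, ZMod.card]
  have hrankK : Module.finrank (ZMod 2) K1 = 1 := finrank_span_singleton hones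
  have hrankQ : Module.finrank (ZMod 2) ((ZMod p → ZMod 2) ⧸ K1) = p - 1 := by
    have h := Submodule.finrank_quotient_add_finrank K1
    rw [hrankK, hrankU] at h
    omega
  have hup : π1 u.toAdd ∈ Submodule.span (ZMod 2) (π1 '' Tset) := by
    rw [← Submodule.map_span]
    exact Submodule.mem_map_of_mem huspan
  obtain ⟨b, hbT, hbspan, hbind⟩ := exists_linearIndependent (ZMod 2) (π1 '' Tset)
  have hup2 : π1 u.toAdd ∈ Submodule.span (ZMod 2) b := by rw [hbspan]; exact hup
  rw [Submodule.mem_span_set] at hup2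
  obtain ⟨cf, hcfsupp, hcfsum⟩ := hup2
  have hbfin : b.Finite := hbind.setFinite
  have hcard : cf.support.card ≤ p - 1 := by
    have hsub : cf.support ⊆ hbfin.toFinset :=
      fun x hx => hbfin.mem_toFinset.2 (hcfsupp hx)
    have hco : (hbfin.toFinset : Set ((ZMod p → ZMod 2) ⧸ K1)) = b := hbfin.coe_toFinset
    have hind := hbind
    rw [← hco] at hind
    calc cf.support.card ≤ hbfin.toFinset.card := Finset.card_le_card hsub
      _ ≤ Module.finrank (ZMod 2) ((ZMod p → ZMod 2) ⧸ K1) :=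
          LinearIndependent.finset_card_le_finrank hind
      _ = p - 1 := hrankQ
  have hall1 : ∀ r : ZMod 2, r ≠ 0 → r = 1 := by decide
  have hall1' : ∀ r : ZMod 2, r = 0 ∨ r = 1 := by decide
  have hsum : ∑ a ∈ cf.support, a = π1 u.toAdd := by
    rw [← hcfsum, Finsupp.sum]
    refine Finset.sum_congr rfl ?_
    intro a ha
    rw [hall1 _ (Finsupp.mem_support_iff.1 ha), one_smul]
  have hlift2 : ∀ a : (ZMod p → ZMod 2) ⧸ K1, ∃ t : ZMod p → ZMod 2,
      a ∈ cf.support → (t ∈ Tset ∧ π1 t = a) := by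
    intro a
    by_cases ha : a ∈ cf.support
    · obtain ⟨t, htT, htπ⟩ := hbT (hcfsupp ha)
      exact ⟨t, fun _ => ⟨htT, htπ⟩⟩
    · exact ⟨0, fun h => absurd h ha⟩
  choose wlift hwlift using hlift2
  have hπsum : π1 (∑ a ∈ cf.support, wlift a) = π1 u.toAdd := by
    rw [map_sum, Finset.sum_congr rfl (fun a ha => (hwlift a ha).2)]
    exact hsum
  have hdiff : u.toAdd - ∑ a ∈ cf.support, wlift a ∈ K1 := by
    have h0 : π1 (u.toAdd - ∑ a ∈ cf.support, wlift a) = 0 := by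
      rw [map_sub, hπsum, sub_self]
    rwa [hπ1def, Submodule.mkQ_apply, Submodule.Quotient.mk_eq_zero] at h0
  have hq1 : ∀ x ∈ K1, qhom p (ofAdd x) = 1 := by
    intro x hx
    rw [hK1def, Submodule.mem_span_singleton] at hx
    obtain ⟨r, rfl⟩ := hx
    rcases hall1' r with hr | hr
    · rw [hr, zero_smul, ofAdd_zero, map_one]
    · rw [hr, one_smul]
      exact q_const_one p
  have hfinal : qhom p (ofAdd (∑ a ∈ cf.support, wlift a)) = v := by
    have hdecomp : u.toAdd = (∑ a ∈ cf.support, wlift a)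
        + (u.toAdd - ∑ a ∈ cf.support, wlift a) := by abel
    have h1 : qhom p (ofAdd u.toAdd) = v := by rw [ofAdd_toAdd]; exact huv
    rw [hdecomp, ofAdd_add, map_mul, hq1 _ hdiff, mul_one] at h1
    exact h1
  have hdata : ∀ a : (ZMod p → ZMod 2) ⧸ K1, ∃ (kk : ℕ) (ss : WreathQuot p),
      a ∈ cf.support → (kk < p ∧ ss ∈ S ∧
        qhom p (ofAdd (wlift a)) = cElem p ^ kk * ss * (cElem p ^ kk)⁻¹) := by
    intro a
    by_cases ha : a ∈ cf.support
    · obtain ⟨k, s, hsS, ht⟩ := (hwlift a ha).1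
      refine ⟨k.val, s, fun _ => ⟨ZMod.val_lt k, hsS, ?_⟩⟩
      rw [ht, ← conj_q, hlft s hsS]
    · exact ⟨0, 1, fun h => absurd h ha⟩
  choose kf sf hksf using hdata
  exact ⟨(ZMod p → ZMod 2) ⧸ K1, cf.support, kf, sf, wlift, hcard,
    fun i hi => (hksf i hi).1, fun i hi => (hksf i hi).2.1,
    fun i hi => (hksf i hi).2.2, hfinal⟩

end ShortWordsAux

open scoped Classical in
/-- For an odd prime `p` and `G = (C₂ ≀ C_p)/Z = V ⋊ ⟨c⟩`: if
`X = {c} ∪ S` with `S ⊆ V` generates `G`, then every `v ∈ V` is a word of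
length at most `3(p-1)` in `X` (inverses allowed) in which the elements of
`S` occur at most `p - 1` times in total. -/
theorem short_words_for_V (p : ℕ) (hp : p.Prime) (hodd : Odd p)
    (S : Set (WreathQuot p)) (hS : S ⊆ Vsub p)
    (hgen : Subgroup.closure ({cElem p} ∪ S) = ⊤) :
    ∀ v ∈ Vsub p, ∃ l : List (WreathQuot p),
      (∀ x ∈ l, x = cElem p ∨ x = (cElem p)⁻¹ ∨ x ∈ S ∨ x⁻¹ ∈ S) ∧
      l.length ≤ 3 * (p - 1) ∧
      l.countP (fun x => decide (x ∈ S ∨ x⁻¹ ∈ S)) ≤ p - 1 ∧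
      l.prod = v := by
  intro v hv
  haveI : Fact p.Prime := ⟨hp⟩
  haveI : NeZero p := ⟨hp.ne_zero⟩
  have hc : cElem p ∉ S := by
    intro h
    have h1 := hS h
    rw [ShortWordsAux.Vsub_eq_ker] at h1
    have h1' : ShortWordsAux.phom p (cElem p) = 1 := h1
    rw [ShortWordsAux.phom_c] at h1'
    have h2 := congrArg Multiplicative.toAdd h1'
    simp only [toAdd_ofAdd, toAdd_one] at h2
    exact one_ne_zero h2
  have hci : (cElem p)⁻¹ ∉ S := by
    intro h
    have h1 := hS h
    rw [ShortWordsAux.Vsub_eq_ker] at h1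
    have h1' : ShortWordsAux.phom p (cElem p)⁻¹ = 1 := h1
    rw [map_inv, ShortWordsAux.phom_c, inv_eq_one] at h1'
    have h2 := congrArg Multiplicative.toAdd h1'
    simp only [toAdd_ofAdd, toAdd_one] at h2
    exact one_ne_zero h2
  obtain ⟨ι, A, kf, sf, gf, hcard, hk, hs, hq, hfin⟩ :=
    ShortWordsAux.extract p S hS hgen hv
  obtain ⟨l, h1, h2, h3, h4⟩ := ShortWordsAux.assembly p S hc hci A kf sf gf hk hs hq
  refine ⟨l, h1, ?_, le_trans h3 hcard, by rw [h4, hfin]⟩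
  rw [h2]
  have hp2 : 2 ≤ p := hp.two_le
  omega
end

section
/- Let p be an odd prime and G = (C₂ ≀ C_p)/Z(C₂ ≀ C_p). Then for every generating set X of G, the diameter of the Cayley graph Cay(G,X) is at most (13/2)(p−1). -/
open SemidirectProduct

namespace DiamAux

variable {p : ℕ}

/-- shift as a linear map on functions -/
def shiftL (p : ℕ) (m : ZMod p) : (ZMod p → ZMod 2) →ₗ[ZMod 2] (ZMod p → ZMod 2) where
  toFun f := fun i => f (i + m)
  map_add' _ _ := rfl
  map_smul' _ _ := rfl

@[simp] lemma shiftL_apply (m : ZMod p) (f : ZMod p → ZMod 2) (i : ZMod p) :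
    shiftL p m f i = f (i + m) := rfl

@[simp] lemma shiftL_zero (f : ZMod p → ZMod 2) : shiftL p 0 f = f := by
  funext i; simp

lemma shiftL_shiftL (m m' : ZMod p) (f : ZMod p → ZMod 2) :
    shiftL p m (shiftL p m' f) = shiftL p (m + m') f := by
  funext i; simp [add_assoc]

def embM (p : ℕ) : Multiplicative (ZMod p → ZMod 2) →* WreathQuot p :=
  (QuotientGroup.mk' _).comp (SemidirectProduct.inl (φ := wreathShift p))

def cpowM (p : ℕ) : Multiplicative (ZMod p) →* WreathQuot p :=
  (QuotientGroup.mk' _).comp (SemidirectProduct.inr (φ := wreathShift p))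

def emb (p : ℕ) (f : ZMod p → ZMod 2) : WreathQuot p := embM p (Multiplicative.ofAdd f)

def cpow (p : ℕ) (h : ZMod p) : WreathQuot p := cpowM p (Multiplicative.ofAdd h)

lemma emb_add (f g : ZMod p → ZMod 2) : emb p (f + g) = emb p f * emb p g := by
  rw [emb, ofAdd_add, map_mul]; rfl

@[simp] lemma emb_zero : emb p 0 = 1 := by
  rw [emb]; exact map_one _

lemma cpow_add (h h' : ZMod p) : cpow p (h + h') = cpow p h * cpow p h' := by
  rw [cpow, ofAdd_add, map_mul]; rfl

@[simp] lemma cpow_zero : cpow p 0 = 1 := by rw [cpow]; exact map_one _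

lemma add_self_eq_zero' (f : ZMod p → ZMod 2) : f + f = 0 := by
  funext i
  simpa using CharTwo.add_self_eq_zero (f i)

lemma emb_self_mul (f : ZMod p → ZMod 2) : emb p f * emb p f = 1 := by
  rw [← emb_add, add_self_eq_zero', emb_zero]

@[simp] lemma emb_inv (f : ZMod p → ZMod 2) : (emb p f)⁻¹ = emb p f :=
  inv_eq_of_mul_eq_one_right (emb_self_mul f)

lemma wreathShift_ofAdd (h : ZMod p) (f : ZMod p → ZMod 2) :
    wreathShift p (Multiplicative.ofAdd h) (Multiplicative.ofAdd f)
      = Multiplicative.ofAdd (shiftL p h f) := rfl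

lemma inr_mul_inl' (h : ZMod p) (f : ZMod p → ZMod 2) :
    (inr (φ := wreathShift p) (Multiplicative.ofAdd h)) * inl (Multiplicative.ofAdd f)
      = inl (Multiplicative.ofAdd (shiftL p h f)) * inr (Multiplicative.ofAdd h) := by
  rw [← wreathShift_ofAdd, inl_aut]
  simp [mul_assoc]

lemma cpow_emb (h : ZMod p) (f : ZMod p → ZMod 2) :
    cpow p h * emb p f = emb p (shiftL p h f) * cpow p h := by
  simp only [cpow, emb, cpowM, embM, MonoidHom.comp_apply, ← map_mul, inr_mul_inl']

end DiamAux
namespace DiamAux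

variable {p : ℕ}

lemma const_mem_center (c : ZMod 2) :
    (inl (Multiplicative.ofAdd (fun _ => c : ZMod p → ZMod 2)) : Wreath p)
      ∈ Subgroup.center (Wreath p) := by
  rw [Subgroup.mem_center_iff]
  intro w
  ext
  · simp only [SemidirectProduct.mul_left, left_inl, right_inl, map_one, MulAut.one_apply]
    have h1 : (wreathShift p w.right) (Multiplicative.ofAdd (fun _ => c : ZMod p → ZMod 2))
        = Multiplicative.ofAdd (fun _ => c : ZMod p → ZMod 2) := rfl
    rw [h1, mul_comm]
  · simp

lemma center_eq (z : Wreath p) (hz : z ∈ Subgroup.center (Wreath p)) :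
    z.right = 1 ∧ ∃ c : ZMod 2, z.left = Multiplicative.ofAdd (fun _ => c) := by
  rw [Subgroup.mem_center_iff] at hz
  constructor
  · have h1 : ∀ f : ZMod p → ZMod 2, shiftL p z.right.toAdd f = f := by
      intro f
      have h0 := congrArg SemidirectProduct.left (hz (inl (Multiplicative.ofAdd f)))
      simp only [SemidirectProduct.mul_left, left_inl, right_inl, map_one, MulAut.one_apply] at h0
      have h2 : (wreathShift p z.right) (Multiplicative.ofAdd f)
          = Multiplicative.ofAdd (shiftL p z.right.toAdd f) := rfl
      rw [h2, mul_comm] at h0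
      exact Multiplicative.ofAdd.injective (mul_left_cancel h0.symm)
    have h3 := congrFun (h1 (Pi.single 0 1)) (-z.right.toAdd)
    rw [shiftL_apply, neg_add_cancel, Pi.single_eq_same] at h3
    by_contra hne
    have hne' : (-z.right.toAdd) ≠ 0 := by
      simp only [ne_eq, neg_eq_zero]
      exact fun h => hne (Multiplicative.toAdd.injective h)
    rw [Pi.single_eq_of_ne hne'] at h3
    exact one_ne_zero h3
  · have h1 : ∀ h : ZMod p, shiftL p h z.left.toAdd = z.left.toAdd := by
      intro h
      have h0 := congrArg SemidirectProduct.left (hz (inr (Multiplicative.ofAdd h)))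
      simp only [SemidirectProduct.mul_left, left_inr, right_inr, map_one, mul_one, one_mul] at h0
      have h2 : (wreathShift p (Multiplicative.ofAdd h)) z.left
          = Multiplicative.ofAdd (shiftL p h z.left.toAdd) := rfl
      rw [h2] at h0
      exact congrArg Multiplicative.toAdd h0
    refine ⟨z.left.toAdd 0, ?_⟩
    have key : ∀ i : ZMod p, z.left.toAdd i = z.left.toAdd 0 := by
      intro i
      have := congrFun (h1 i) 0
      simpa using this
    have : z.left.toAdd = (fun _ => z.left.toAdd 0) := funext key
    exact Multiplicative.toAdd.injective this

@[simp] lemma emb_const (c : ZMod 2) : emb p (fun _ => c) = 1 := by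
  rw [emb, embM]
  simp only [MonoidHom.comp_apply, QuotientGroup.mk'_apply]
  rw [QuotientGroup.eq_one_iff]
  exact const_mem_center c

lemma emb_eq_one (f : ZMod p → ZMod 2) (hf : emb p f = 1) :
    ∃ c : ZMod 2, f = fun _ => c := by
  rw [emb, embM, MonoidHom.comp_apply, QuotientGroup.mk'_apply, QuotientGroup.eq_one_iff] at hf
  obtain ⟨-, c, hc⟩ := center_eq _ hf
  exact ⟨c, Multiplicative.ofAdd.injective (by simpa using hc)⟩

lemma exists_decomp (q : WreathQuot p) : ∃ f h, q = emb p f * cpow p h := by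
  obtain ⟨w, rfl⟩ := QuotientGroup.mk'_surjective (Subgroup.center (Wreath p)) q
  refine ⟨w.left.toAdd, w.right.toAdd, ?_⟩
  rw [emb, cpow, embM, cpowM, MonoidHom.comp_apply, MonoidHom.comp_apply, ← map_mul]
  congr 1
  exact (inl_left_mul_inr_right w).symm

def rightQ (p : ℕ) : WreathQuot p →* Multiplicative (ZMod p) :=
  QuotientGroup.lift _ (SemidirectProduct.rightHom) (by
    intro z hz
    have := (center_eq z hz).1
    simpa [SemidirectProduct.rightHom] using this)

@[simp] lemma rightQ_emb (f : ZMod p → ZMod 2) : rightQ p (emb p f) = 1 := by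
  rw [emb, embM]; rfl

@[simp] lemma rightQ_cpow (h : ZMod p) : rightQ p (cpow p h) = Multiplicative.ofAdd h := by
  rw [cpow, cpowM]; rfl

end DiamAux
namespace DiamAux

variable {p : ℕ}

def Cs (p : ℕ) : Submodule (ZMod 2) (ZMod p → ZMod 2) :=
  Submodule.span (ZMod 2) {fun _ => 1}

lemma mem_Cs_iff (f : ZMod p → ZMod 2) : f ∈ Cs p ↔ ∃ c : ZMod 2, f = fun _ => c := by
  rw [Cs, Submodule.mem_span_singleton]
  constructor
  · rintro ⟨c, rfl⟩
    exact ⟨c, by funext i; simp⟩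
  · rintro ⟨c, rfl⟩
    exact ⟨c, by funext i; simp⟩

lemma emb_of_mem_Cs {f : ZMod p → ZMod 2} (hf : f ∈ Cs p) : emb p f = 1 := by
  obtain ⟨c, rfl⟩ := (mem_Cs_iff f).1 hf
  exact emb_const c

lemma shiftL_mem_Cs {m : ZMod p} {f : ZMod p → ZMod 2} (hf : f ∈ Cs p) :
    shiftL p m f ∈ Cs p := by
  obtain ⟨c, rfl⟩ := (mem_Cs_iff f).1 hf
  exact (mem_Cs_iff _).2 ⟨c, rfl⟩

/-- the map `v ↦ v ∘ (+k) + v` -/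
def tau (p : ℕ) (k : ZMod p) : (ZMod p → ZMod 2) →ₗ[ZMod 2] (ZMod p → ZMod 2) :=
  shiftL p k + LinearMap.id

lemma tau_apply (k : ZMod p) (f : ZMod p → ZMod 2) (i : ZMod p) :
    tau p k f i = f (i + k) + f i := rfl

lemma tau_mem_Cs {k : ZMod p} {f : ZMod p → ZMod 2} (hf : f ∈ Cs p) : tau p k f ∈ Cs p :=
  (Cs p).add_mem (shiftL_mem_Cs hf) hf

abbrev EQuot (p : ℕ) := (ZMod p → ZMod 2) ⧸ Cs p

lemma tau_comap : Cs p ≤ (Cs p).comap (tau p k) := fun _ hf => tau_mem_Cs hf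

def tauQ (p : ℕ) (k : ZMod p) : EQuot p →ₗ[ZMod 2] EQuot p :=
  Submodule.mapQ (Cs p) (Cs p) (tau p k) (fun _ hf => tau_mem_Cs hf)

lemma tauQ_mk (k : ZMod p) (f : ZMod p → ZMod 2) :
    tauQ p k (Submodule.Quotient.mk f) = Submodule.Quotient.mk (tau p k f) := rfl

section Prime
variable [hp : Fact p.Prime] (hodd : Odd p)

instance : NeZero p := ⟨hp.out.ne_zero⟩

lemma tauQ_injective (hodd : Odd p) {k : ZMod p} (hk : k ≠ 0) :
    Function.Injective (tauQ p k) := by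
  rw [← LinearMap.ker_eq_bot, LinearMap.ker_eq_bot']
  intro m hm
  obtain ⟨v, rfl⟩ := Submodule.Quotient.mk_surjective (Cs p) m
  rw [tauQ_mk] at hm
  rw [Submodule.Quotient.mk_eq_zero] at hm ⊢
  obtain ⟨c, hc⟩ := (mem_Cs_iff _).1 hm
  -- sum over all i
  have hsum : (Finset.univ.sum fun i => tau p k v i) = (p : ZMod 2) * c := by
    rw [hc]
    simp [Finset.sum_const, Finset.card_univ, ZMod.card, nsmul_eq_mul]
  have hsum2 : (Finset.univ.sum fun i => tau p k v i) = 0 := by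
    have : (Finset.univ.sum fun i : ZMod p => v (i + k)) = Finset.univ.sum v := by
      exact Fintype.sum_equiv (Equiv.addRight k) _ _ (fun i => rfl)
    simp only [tau_apply, Finset.sum_add_distrib, this]
    rw [← two_mul, show (2 : ZMod 2) = 0 from rfl, zero_mul]
  have hp2 : (p : ZMod 2) = 1 := by
    have h1 : p % 2 = 1 := Nat.odd_iff.1 hodd
    rw [← ZMod.natCast_mod, h1, Nat.cast_one]
  have hc0 : c = 0 := by
    have := hsum.symm.trans hsum2
    rwa [hp2, one_mul] at this
  rw [hc0] at hc
  -- now v (i+k) = v i for all i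
  have hstep : ∀ i, v (i + k) = v i := by
    intro i
    have := congrFun hc i
    rw [tau_apply] at this
    have h2 := eq_neg_of_add_eq_zero_left this
    rwa [CharTwo.neg_eq] at h2
  have hsm : ∀ n : ℕ, v ((n : ZMod p) * k) = v 0 := by
    intro n
    induction n with
    | zero => simp
    | succ n ih =>
      have : ((n + 1 : ℕ) : ZMod p) * k = (n : ZMod p) * k + k := by push_cast; ring
      rw [this, hstep, ih]
  have hconst : ∀ i : ZMod p, v i = v 0 := by
    intro i
    have := hsm (i * k⁻¹).val
    rwa [ZMod.natCast_val, ZMod.cast_id, mul_assoc, inv_mul_cancel₀ hk, mul_one] at this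
  exact (mem_Cs_iff v).2 ⟨v 0, funext hconst⟩

instance : Finite (EQuot p) :=
  Finite.of_surjective _ (Submodule.Quotient.mk_surjective (Cs p))

lemma tauQ_surjective (hodd : Odd p) {k : ZMod p} (hk : k ≠ 0) :
    Function.Surjective (tauQ p k) :=
  Finite.injective_iff_surjective.1 (tauQ_injective hodd hk)

lemma finrank_EQuot_le : Module.finrank (ZMod 2) (EQuot p) ≤ p - 1 := by
  have h1 : Module.finrank (ZMod 2) (ZMod p → ZMod 2) = p := by
    rw [Module.finrank_pi]
    simp [ZMod.card]
  have h2 := Submodule.finrank_quotient_add_finrank (Cs p)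
  rw [h1] at h2
  have h2' : Module.finrank (ZMod 2) (EQuot p) + Module.finrank (ZMod 2) (Cs p) = p := h2
  clear h2
  have h3 : 0 < Module.finrank (ZMod 2) (Cs p) := by
    have : Nontrivial (Cs p) := by
      refine Submodule.nontrivial_iff_ne_bot.2 ?_
      intro hbot
      have h4 : (fun _ => 1 : ZMod p → ZMod 2) ∈ Cs p :=
        Submodule.mem_span_singleton_self _
      rw [hbot, Submodule.mem_bot] at h4
      have := congrFun h4 0
      simp at this
    exact Module.finrank_pos
  omega

end Prime
end DiamAux
namespace DiamAux
open Submodule in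

lemma zmod2_cases (c : ZMod 2) : c = 0 ∨ c = 1 := by revert c; decide

/-- generic subset-sum representation lemma over `ZMod 2` -/
lemma rep_of_span {E : Type*} [AddCommGroup E] [Module (ZMod 2) E] [Finite E]
    (S : Set E) (hspan : Submodule.span (ZMod 2) S = ⊤) (w : E) :
    ∃ L : List E, (∀ d ∈ L, d ∈ S) ∧ L.length ≤ Module.finrank (ZMod 2) E ∧ L.sum = w := by
  classical
  obtain ⟨b, hbS, hspanb, hli⟩ := exists_linearIndependent (ZMod 2) S
  rw [hspan] at hspanb
  have hbfin : b.Finite := Set.toFinite b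
  haveI : Fintype b := hbfin.fintype
  have hcard : b.toFinset.card = Module.finrank (ZMod 2) E := by
    have := finrank_span_set_eq_card hli
    rw [hspanb, finrank_top] at this
    exact this.symm
  have hw : w ∈ Submodule.span (ZMod 2) (b.toFinset : Set E) := by
    rw [Set.coe_toFinset, hspanb]; trivial
  obtain ⟨f, -, hf⟩ := Submodule.mem_span_finset.1 hw
  set s' := b.toFinset.filter (fun i => f i = 1) with hs'
  have hsum : s'.sum id = w := by
    rw [← hf, hs', Finset.sum_filter]
    refine Finset.sum_congr rfl ?_
    intro i _
    rcases zmod2_cases (f i) with h | h <;> simp [h]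
  refine ⟨s'.toList, ?_, ?_, ?_⟩
  · intro d hd
    rw [Finset.mem_toList, hs', Finset.mem_filter, Set.mem_toFinset] at hd
    exact hbS hd.1
  · rw [Finset.length_toList]
    calc s'.card ≤ b.toFinset.card := Finset.card_filter_le _ _
      _ = _ := hcard
  · show (Multiset.toList s'.val).sum = w
    rw [Multiset.sum_toList]
    rw [Finset.sum, Multiset.map_id] at hsum
    exact hsum

end DiamAux
namespace DiamAux

variable {p : ℕ}

noncomputable def fpart (q : WreathQuot p) : ZMod p → ZMod 2 := (exists_decomp q).choose

noncomputable def hpart (q : WreathQuot p) : ZMod p :=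
  (exists_decomp q).choose_spec.choose

lemma decomp_eq (q : WreathQuot p) : q = emb p (fpart q) * cpow p (hpart q) :=
  (exists_decomp q).choose_spec.choose_spec

lemma cpow_inv (h : ZMod p) : (cpow p h)⁻¹ = cpow p (-h) := by
  apply inv_eq_of_mul_eq_one_right
  rw [← cpow_add, add_neg_cancel, cpow_zero]

lemma mul_decomp (f f' : ZMod p → ZMod 2) (h h' : ZMod p) :
    (emb p f * cpow p h) * (emb p f' * cpow p h')
      = emb p (f + shiftL p h f') * cpow p (h + h') := by
  calc (emb p f * cpow p h) * (emb p f' * cpow p h')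
      = emb p f * ((cpow p h * emb p f') * cpow p h') := by group
    _ = emb p f * ((emb p (shiftL p h f') * cpow p h) * cpow p h') := by rw [cpow_emb]
    _ = (emb p f * emb p (shiftL p h f')) * (cpow p h * cpow p h') := by group
    _ = emb p (f + shiftL p h f') * cpow p (h + h') := by rw [emb_add, cpow_add]

lemma inv_decomp (f : ZMod p → ZMod 2) (h : ZMod p) :
    (emb p f * cpow p h)⁻¹ = emb p (shiftL p (-h) f) * cpow p (-h) := by
  rw [mul_inv_rev, cpow_inv, emb_inv, cpow_emb]

/-- the function part of the commutator of two elements -/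
noncomputable def dv (x y : WreathQuot p) : ZMod p → ZMod 2 :=
  fpart x + shiftL p (hpart x) (fpart y) + shiftL p (hpart y) (fpart x) + fpart y

lemma comm_eq (x y : WreathQuot p) : x * y * x⁻¹ * y⁻¹ = emb p (dv x y) := by
  conv_lhs => rw [decomp_eq x, decomp_eq y]
  have e1 : hpart x + hpart y + -hpart x = hpart y := by ring
  have e4 : hpart y + -hpart y = 0 := by ring
  rw [inv_decomp, inv_decomp, mul_decomp, mul_decomp, mul_decomp, e1, shiftL_shiftL,
    shiftL_shiftL, e1, e4, shiftL_zero, cpow_zero, mul_one]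
  rfl

/-- a commutator word as a list -/
noncomputable def cword (x y : WreathQuot p) : List (WreathQuot p) := [x, y, x⁻¹, y⁻¹]

lemma cword_prod (x y : WreathQuot p) : (cword x y).prod = emb p (dv x y) := by
  rw [cword, ← comm_eq]
  simp [mul_assoc]

section Core

variable [hp : Fact p.Prime]
variable (X : Set (WreathQuot p)) (k : ZMod p)

/-- the set of achievable "atom" function parts -/
def Dset : Set (ZMod p → ZMod 2) :=
  {g | ∃ l : ℕ, l < p ∧ ∃ x ∈ X, ∃ y ∈ X, g = shiftL p ((l : ZMod p) * k) (dv x y)}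

def Msub : Submodule (ZMod 2) (ZMod p → ZMod 2) :=
  Submodule.span (ZMod 2) (Dset X k) ⊔ Cs p

lemma Cs_le_Msub : Cs p ≤ Msub X k := le_sup_right

lemma dv_mem_Msub {x y : WreathQuot p} (hx : x ∈ X) (hy : y ∈ X) (hpp : 0 < p) :
    dv x y ∈ Msub X k := by
  apply Submodule.mem_sup_left
  apply Submodule.subset_span
  exact ⟨0, hpp, x, hx, y, hy, by simp⟩

lemma shiftL_mem_Msub (hk : k ≠ 0) {m : ZMod p} {f : ZMod p → ZMod 2}
    (hf : f ∈ Msub X k) : shiftL p m f ∈ Msub X k := by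
  have hmap : Submodule.map (shiftL p m) (Msub X k) ≤ Msub X k := by
    rw [Msub, Submodule.map_sup, Submodule.map_span]
    apply sup_le
    · apply le_trans (Submodule.span_mono ?_) le_sup_left
      rintro g ⟨g', ⟨l, hl, x, hx, y, hy, rfl⟩, rfl⟩
      refine ⟨((m + (l : ZMod p) * k) * k⁻¹).val, ZMod.val_lt _, x, hx, y, hy, ?_⟩
      rw [shiftL_shiftL]
      congr 1
      rw [ZMod.natCast_val, ZMod.cast_id, mul_assoc, inv_mul_cancel₀ hk, mul_one]
    · refine le_trans ?_ le_sup_right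
      rintro g ⟨g', hg', rfl⟩
      exact shiftL_mem_Cs hg'
  exact hmap ⟨f, hf, rfl⟩

/-- the subgroup of the quotient corresponding to `Msub` -/
def NG : Subgroup (WreathQuot p) where
  carrier := {q | ∃ m ∈ Msub X k, q = emb p m}
  one_mem' := ⟨0, Submodule.zero_mem _, emb_zero.symm⟩
  mul_mem' := by
    rintro q q' ⟨m, hm, rfl⟩ ⟨m', hm', rfl⟩
    exact ⟨m + m', Submodule.add_mem _ hm hm', (emb_add m m').symm⟩
  inv_mem' := by
    rintro q ⟨m, hm, rfl⟩
    exact ⟨m, hm, emb_inv m⟩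

lemma NG_normal (hk : k ≠ 0) : (NG X k).Normal := by
  constructor
  rintro n ⟨m, hm, rfl⟩ g
  rw [decomp_eq g]
  refine ⟨shiftL p (hpart g) m, shiftL_mem_Msub X k hk hm, ?_⟩
  have e1 : hpart g + 0 = hpart g := by ring
  have e2 : hpart g + -hpart g = 0 := by ring
  rw [show emb p m = emb p m * cpow p 0 by rw [cpow_zero, mul_one], inv_decomp,
    mul_decomp, mul_decomp, e1, shiftL_shiftL, e2, shiftL_zero, cpow_zero, mul_one]
  congr 1
  have : fpart g + shiftL p (hpart g) m + fpart g
      = shiftL p (hpart g) m + (fpart g + fpart g) := by abel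
  rw [this, add_self_eq_zero', add_zero]

end Core
end DiamAux
namespace DiamAux

variable {p : ℕ}

lemma comm_of_closure {G H : Type*} [Group G] [Group H] (S : Set G)
    (h : Subgroup.closure S = ⊤) (φ : G →* H)
    (hc : ∀ x ∈ S, ∀ y ∈ S, Commute (φ x) (φ y)) (u v : G) :
    Commute (φ u) (φ v) := by
  have hu : u ∈ Subgroup.closure S := by rw [h]; trivial
  have hv : v ∈ Subgroup.closure S := by rw [h]; trivial
  refine Subgroup.closure_induction₂ (p := fun x y _ _ => Commute (φ x) (φ y))
    (fun x y hx hy => hc x hx y hy) ?_ ?_ ?_ ?_ ?_ ?_ hu hv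
  · intro x _; rw [map_one]; exact Commute.one_left _
  · intro x _; rw [map_one]; exact Commute.one_right _
  · intro x y z _ _ _ h1 h2; rw [map_mul]; exact h1.mul_left h2
  · intro y z x _ _ _ h1 h2; rw [map_mul]; exact h1.mul_right h2
  · intro x y _ _ h1; rw [map_inv]; exact h1.inv_left
  · intro x y _ _ h1; rw [map_inv]; exact h1.inv_right

lemma zmod2_solve : ∀ A B C c : ZMod 2, A + B + C = c → A + B = C + c := by decide

lemma conj_emb (g : WreathQuot p) (v : ZMod p → ZMod 2) :
    g * emb p v * g⁻¹ = emb p (shiftL p (hpart g) v) := by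
  have e1 : hpart g + 0 = hpart g := by ring
  have e2 : hpart g + -hpart g = 0 := by ring
  conv_lhs => rw [decomp_eq g]
  rw [show emb p v = emb p v * cpow p 0 by rw [cpow_zero, mul_one], inv_decomp,
    mul_decomp, mul_decomp, e1, shiftL_shiftL, e2, shiftL_zero, cpow_zero, mul_one]
  congr 1
  have : fpart g + shiftL p (hpart g) v + fpart g
      = shiftL p (hpart g) v + (fpart g + fpart g) := by abel
  rw [this, add_self_eq_zero', add_zero]

section Core

variable [hp : Fact p.Prime]
variable (X : Set (WreathQuot p))

open scoped commutatorElement in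
lemma span_Dset_top (hodd : Odd p) (hgen : Subgroup.closure X = ⊤)
    {a : WreathQuot p} (ha : a ∈ X) (hk : hpart a ≠ 0) :
    Submodule.span (ZMod 2) ((⇑(Cs p).mkQ) '' (Dset X (hpart a))) = ⊤ := by
  set k := hpart a with hkdef
  haveI := NG_normal X k hk
  set φ := QuotientGroup.mk' (NG X k) with hφ
  have hXc : ∀ x ∈ X, ∀ y ∈ X, Commute (φ x) (φ y) := by
    intro x hx y hy
    rw [← commutatorElement_eq_one_iff_commute]
    have h1 : ⁅φ x, φ y⁆ = φ ⁅x, y⁆ := (map_commutatorElement φ x y).symm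
    rw [h1, hφ, QuotientGroup.mk'_apply, QuotientGroup.eq_one_iff,
      commutatorElement_def, comm_eq]
    exact ⟨dv x y, dv_mem_Msub X k hx hy hp.out.pos, rfl⟩
  have hall : ∀ v : ZMod p → ZMod 2, tau p k v ∈ Msub X k := by
    intro v
    have hcomm := comm_of_closure X hgen φ hXc a (emb p v)
    have hconj : a * emb p v * a⁻¹ = emb p (shiftL p k v) := conj_emb a v
    have h2 : φ (emb p (shiftL p k v)) = φ (emb p v) := by
      rw [← hconj, map_mul, map_mul, map_inv, hcomm.eq, mul_inv_cancel_right]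
    have h3 : emb p (shiftL p k v) * (emb p v)⁻¹ ∈ NG X k := by
      rw [← QuotientGroup.eq_one_iff (G := WreathQuot p), ← QuotientGroup.mk'_apply,
        ← hφ, map_mul, map_inv, h2]
      group
    rw [emb_inv, ← emb_add] at h3
    obtain ⟨m, hm, hem⟩ := h3
    have h4 : emb p (shiftL p k v + v + m) = 1 := by
      rw [emb_add, hem, ← emb_add, add_self_eq_zero', emb_zero]
    obtain ⟨c, hc⟩ := emb_eq_one _ h4
    have h5 : tau p k v = m + (fun _ => c) := by
      funext i
      have hv : v (i + k) + v i + m i = c := by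
        have := congrFun hc i
        simpa using this
      show v (i + k) + v i = m i + c
      exact zmod2_solve _ _ _ _ hv
    rw [h5]
    exact (Msub X k).add_mem hm (Cs_le_Msub X k ((mem_Cs_iff _).2 ⟨c, rfl⟩))
  -- now conclude surjectivity of the span
  have htop : Submodule.map (Cs p).mkQ (Msub X k) = ⊤ := by
    rw [Submodule.eq_top_iff']
    intro e
    obtain ⟨e', he'⟩ := tauQ_surjective hodd hk e
    obtain ⟨v, rfl⟩ := Submodule.Quotient.mk_surjective (Cs p) e'
    rw [tauQ_mk] at he'
    exact ⟨tau p k v, hall v, he'⟩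
  rw [Msub, Submodule.map_sup, Submodule.map_span] at htop
  have hbot : Submodule.map (Cs p).mkQ (Cs p) = ⊥ := by
    apply le_antisymm _ bot_le
    rintro e ⟨x, hx, rfl⟩
    rw [Submodule.mem_bot, Submodule.mkQ_apply, Submodule.Quotient.mk_eq_zero]
    exact hx
  rw [hbot, sup_bot_eq] at htop
  exact htop

end Core
end DiamAux
namespace DiamAux

variable {p : ℕ}

noncomputable def nu (p : ℕ) (fa : ZMod p → ZMod 2) (k : ZMod p) (n : ℕ) : ZMod p → ZMod 2 :=
  (Finset.range n).sum (fun l => shiftL p ((l : ZMod p) * k) fa)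

noncomputable def aval (k : ZMod p) (t : ℕ × WreathQuot p × WreathQuot p) :
    ZMod p → ZMod 2 :=
  shiftL p ((t.1 : ZMod p) * k) (dv t.2.1 t.2.2)

noncomputable def blocks : List (ℕ × WreathQuot p × WreathQuot p) → List (WreathQuot p)
  | [] => []
  | t :: ts => cword t.2.1 t.2.2 ++ blocks ts

lemma blocks_length (T : List (ℕ × WreathQuot p × WreathQuot p)) :
    (blocks T).length = 4 * T.length := by
  induction T with
  | nil => rfl
  | cons t ts ih =>
    rw [blocks, List.length_append, ih, List.length_cons, cword]
    simp
    omega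

lemma blocks_prod (T : List (ℕ × WreathQuot p × WreathQuot p)) :
    (blocks T).prod = emb p ((T.map (fun t => dv t.2.1 t.2.2)).sum) := by
  induction T with
  | nil => simp [blocks]
  | cons t ts ih =>
    rw [blocks, List.prod_append, ih, cword_prod, List.map_cons, List.sum_cons, emb_add]

lemma blocks_letters (X : Set (WreathQuot p)) (T : List (ℕ × WreathQuot p × WreathQuot p))
    (hT : ∀ t ∈ T, t.2.1 ∈ X ∧ t.2.2 ∈ X) :
    ∀ g ∈ blocks T, g ∈ X ∨ g⁻¹ ∈ X := by
  induction T with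
  | nil => intro g hg; simp [blocks] at hg
  | cons t ts ih =>
    intro g hg
    rw [blocks, List.mem_append] at hg
    rcases hg with hg | hg
    · have hx := (hT t List.mem_cons_self).1
      have hy := (hT t List.mem_cons_self).2
      rw [cword] at hg
      simp only [List.mem_cons, List.not_mem_nil, or_false] at hg
      rcases hg with rfl | rfl | rfl | rfl
      · exact Or.inl hx
      · exact Or.inl hy
      · exact Or.inr (by rwa [inv_inv])
      · exact Or.inr (by rwa [inv_inv])
    · exact ih (fun t' ht' => hT t' (List.mem_cons_of_mem t ht')) g hg

lemma word_lemma (X : Set (WreathQuot p)) (a : WreathQuot p) (ha : a ∈ X) :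
    ∀ n : ℕ, ∀ T : List (ℕ × WreathQuot p × WreathQuot p),
      (∀ t ∈ T, t.1 < n ∧ t.2.1 ∈ X ∧ t.2.2 ∈ X) →
      ∃ L : List (WreathQuot p), (∀ g ∈ L, g ∈ X ∨ g⁻¹ ∈ X) ∧
        L.length = n + 4 * T.length ∧
        L.prod = emb p (nu p (fpart a) (hpart a) n + (T.map (aval (hpart a))).sum)
          * cpow p ((n : ZMod p) * hpart a) := by
  intro n
  induction n with
  | zero =>
    intro T hT
    cases T with
    | cons t ts => exact absurd (hT t List.mem_cons_self).1 (Nat.not_lt_zero _)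
    | nil =>
      refine ⟨[], by simp, by simp, ?_⟩
      simp [nu, Finset.range_zero, Finset.sum_empty]
  | succ n ih =>
    intro T hT
    set P : (ℕ × WreathQuot p × WreathQuot p) → Bool := fun t => decide (t.1 < n) with hP
    set T' := T.filter P with hT'
    set T'' := T.filter (fun t => !P t) with hT''
    have hperm : List.Perm (T' ++ T'') T := List.filter_append_perm P T
    have hmemT' : ∀ t ∈ T', t.1 < n ∧ t.2.1 ∈ X ∧ t.2.2 ∈ X := by
      intro t ht
      rw [hT', List.mem_filter] at ht
      exact ⟨by simpa [hP] using ht.2, (hT t ht.1).2.1, (hT t ht.1).2.2⟩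
    have hmemT'' : ∀ t ∈ T'', t.1 = n ∧ t.2.1 ∈ X ∧ t.2.2 ∈ X := by
      intro t ht
      rw [hT'', List.mem_filter] at ht
      have h1 : ¬ t.1 < n := by simpa [hP] using ht.2
      have h2 := (hT t ht.1).1
      exact ⟨by omega, (hT t ht.1).2.1, (hT t ht.1).2.2⟩
    obtain ⟨L', hL'mem, hL'len, hL'prod⟩ := ih T' hmemT'
    refine ⟨L' ++ blocks T'' ++ [a], ?_, ?_, ?_⟩
    · intro g hg
      rw [List.mem_append, List.mem_append] at hg
      rcases hg with (hg | hg) | hg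
      · exact hL'mem g hg
      · exact blocks_letters X T'' (fun t ht => (hmemT'' t ht).2) g hg
      · rw [List.mem_singleton] at hg
        exact Or.inl (hg ▸ ha)
    · rw [List.length_append, List.length_append, blocks_length, hL'len]
      have := hperm.length_eq
      rw [List.length_append] at this
      simp only [List.length_singleton]
      omega
    · have hdeca := decomp_eq a
      rw [List.prod_append, List.prod_append, hL'prod, blocks_prod, List.prod_singleton]
      set fa := fpart a with hfa
      set ka := hpart a with hka
      conv_lhs => rw [hdeca]
      rw [show emb p ((T''.map (fun t => dv t.2.1 t.2.2)).sum)
          = emb p ((T''.map (fun t => dv t.2.1 t.2.2)).sum) * cpow p 0 from by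
            rw [cpow_zero, mul_one]]
      rw [mul_decomp, mul_decomp]
      have hcast : ((n : ZMod p) * ka + 0) + ka = ((n + 1 : ℕ) : ZMod p) * ka := by
        push_cast; ring
      rw [hcast]
      congr 1
      -- function part equality
      have hshift : shiftL p ((n : ZMod p) * ka) ((T''.map (fun t => dv t.2.1 t.2.2)).sum)
          = (T''.map (aval (ka))).sum := by
        rw [map_list_sum (shiftL p ((n : ZMod p) * ka)), List.map_map]
        congr 1
        apply List.map_congr_left
        intro t ht
        have := (hmemT'' t ht).1
        simp only [Function.comp_apply, LinearMap.toAddMonoidHom_coe, aval, this]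
      have hsum : (T.map (aval (ka))).sum
          = (T'.map (aval (ka))).sum + (T''.map (aval (ka))).sum := by
        rw [← List.sum_append, ← List.map_append]
        exact ((hperm.map (aval (ka))).sum_eq).symm
      have hnu : nu p (fa) (ka) (n + 1)
          = nu p (fa) (ka) n + shiftL p ((n : ZMod p) * ka) (fa) := by
        rw [nu, nu, Finset.sum_range_succ]
      rw [hshift, hsum, hnu]
      have : (n : ZMod p) * ka + 0 = (n : ZMod p) * ka := by ring
      rw [this]
      abel

end DiamAux
namespace DiamAux

variable {p : ℕ}

lemma list_pullback {α β : Type*} (f : α → β) (S : Set α) :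
    ∀ L : List β, (∀ e ∈ L, e ∈ f '' S) →
      ∃ T : List α, (∀ t ∈ T, t ∈ S) ∧ T.map f = L := by
  intro L
  induction L with
  | nil => exact fun _ => ⟨[], by simp, rfl⟩
  | cons e L ih =>
    intro hmem
    obtain ⟨T, hT, hmap⟩ := ih (fun e' he' => hmem e' (List.mem_cons_of_mem _ he'))
    obtain ⟨t, ht, hte⟩ := hmem e List.mem_cons_self
    refine ⟨t :: T, ?_, by simp [hmap, hte]⟩
    intro t' ht'
    rcases List.mem_cons.1 ht' with rfl | ht'
    · exact ht
    · exact hT t' ht'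

lemma Dset_eq [hp : Fact p.Prime] (X : Set (WreathQuot p)) (k : ZMod p) :
    Dset X k = (aval k) '' {t | t.1 < p ∧ t.2.1 ∈ X ∧ t.2.2 ∈ X} := by
  ext g
  constructor
  · rintro ⟨l, hl, x, hx, y, hy, rfl⟩
    exact ⟨(l, x, y), ⟨hl, hx, hy⟩, rfl⟩
  · rintro ⟨⟨l, x, y⟩, ⟨hl, hx, hy⟩, rfl⟩
    exact ⟨l, hl, x, hx, y, hy, rfl⟩

end DiamAux

open DiamAux in
/-- For an odd prime `p` and `G = (C₂ ≀ C_p)/Z(C₂ ≀ C_p)`: for every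
generating set `X` of `G`, every element of `G` is a word of length at most
`(13/2)(p-1)` in `X ∪ X⁻¹`; i.e. the diameter of every Cayley graph of `G`
is at most `(13/2)(p-1)`. -/
theorem diam_quot_le (p : ℕ) (hp : p.Prime) (hodd : Odd p)
    (X : Set (WreathQuot p)) (hgen : Subgroup.closure X = ⊤) :
    ∀ g : WreathQuot p, ∃ l : List (WreathQuot p),
      (∀ x ∈ l, x ∈ X ∨ x⁻¹ ∈ X) ∧
      2 * l.length ≤ 13 * (p - 1) ∧
      l.prod = g := by
  haveI : Fact p.Prime := ⟨hp⟩
  intro g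
  have hp2 : 2 ≤ p := hp.two_le
  have hpne2 : p ≠ 2 := by rintro rfl; exact (by decide : ¬ Odd 2) hodd
  have hp3 : 3 ≤ p := by omega
  -- choose a generator with nontrivial shift part
  have hex : ∃ a ∈ X, hpart a ≠ 0 := by
    by_contra hno
    push_neg at hno
    have hXk : X ⊆ (rightQ p).ker := by
      intro x hx
      rw [SetLike.mem_coe, MonoidHom.mem_ker]
      have h2 : rightQ p x = Multiplicative.ofAdd (hpart x) := by
        conv_lhs => rw [decomp_eq x]
        rw [map_mul, rightQ_emb, rightQ_cpow, one_mul]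
      rw [h2, hno x hx]
      rfl
    have htop : (⊤ : Subgroup (WreathQuot p)) ≤ (rightQ p).ker := by
      rw [← hgen]
      exact (Subgroup.closure_le _).2 hXk
    have hc1 : rightQ p (cpow p 1) = 1 := htop (Subgroup.mem_top _)
    rw [rightQ_cpow] at hc1
    have h10 : (1 : ZMod p) = 0 := by
      have := congrArg Multiplicative.toAdd hc1
      simpa using this
    exact one_ne_zero h10
  obtain ⟨a, ha, hk⟩ := hex
  -- choose n
  have hn0 : (hpart g * (hpart a)⁻¹).val < p := ZMod.val_lt _
  have hcast : (((p + (hpart g * (hpart a)⁻¹).val : ℕ)) : ZMod p) * hpart a = hpart g := by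
    push_cast
    rw [ZMod.natCast_self, ZMod.natCast_val, ZMod.cast_id, zero_add,
      mul_assoc, inv_mul_cancel₀ hk, mul_one]
  set n : ℕ := p + (hpart g * (hpart a)⁻¹).val with hn
  -- representation of w' in terms of atoms
  have hspan := span_Dset_top X hodd hgen ha hk
  obtain ⟨L₀, hL₀S, hL₀len, hL₀sum⟩ := rep_of_span _ hspan
    (Submodule.Quotient.mk (fpart g + nu p (fpart a) (hpart a) n))
  have hL₀len' : L₀.length ≤ p - 1 := le_trans hL₀len finrank_EQuot_le
  -- pull back the list of atoms
  have himg : ∀ e ∈ L₀,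
      e ∈ (fun t => (Cs p).mkQ (aval (hpart a) t)) ''
        {t : ℕ × WreathQuot p × WreathQuot p | t.1 < p ∧ t.2.1 ∈ X ∧ t.2.2 ∈ X} := by
    intro e he
    have h1 := hL₀S e he
    rw [Dset_eq X (hpart a)] at h1
    obtain ⟨gg, ⟨t, htS, rfl⟩, rfl⟩ := h1
    exact ⟨t, htS, rfl⟩
  obtain ⟨T, hTmem, hTmap⟩ := list_pullback _ _ L₀ himg
  have hTcond : ∀ t ∈ T, t.1 < n ∧ t.2.1 ∈ X ∧ t.2.2 ∈ X := by
    intro t ht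
    exact ⟨lt_of_lt_of_le (hTmem t ht).1 (by omega), (hTmem t ht).2.1, (hTmem t ht).2.2⟩
  obtain ⟨L, hmem, hlen, hprod⟩ := word_lemma X a ha n T hTcond
  have hTlen : T.length = L₀.length := by
    rw [← hTmap, List.length_map]
  refine ⟨L, hmem, ?_, ?_⟩
  · rw [hlen, hn]
    omega
  · rw [hprod, hcast]
    -- identify the function part
    have hmapeq : List.map (⇑(Cs p).mkQ) (List.map (aval (hpart a)) T)
        = List.map (fun t => (Cs p).mkQ (aval (hpart a) t)) T := by
      rw [List.map_map]
      exact List.map_congr_left (fun t _ => rfl)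
    have hsum2 : Submodule.Quotient.mk ((T.map (aval (hpart a))).sum)
        = Submodule.Quotient.mk (p := Cs p) (fpart g + nu p (fpart a) (hpart a) n) := by
      rw [← hL₀sum, ← hTmap]
      have := map_list_sum ((Cs p).mkQ) (T.map (aval (hpart a)))
      rw [hmapeq] at this
      exact this
    have hdiff : (T.map (aval (hpart a))).sum - (fpart g + nu p (fpart a) (hpart a) n)
        ∈ Cs p := (Submodule.Quotient.eq _).1 hsum2
    have hS : (T.map (aval (hpart a))).sum
        = ((T.map (aval (hpart a))).sum - (fpart g + nu p (fpart a) (hpart a) n))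
          + (fpart g + nu p (fpart a) (hpart a) n) := by abel
    have harr : nu p (fpart a) (hpart a) n + (T.map (aval (hpart a))).sum
        = fpart g + (nu p (fpart a) (hpart a) n + nu p (fpart a) (hpart a) n)
          + ((T.map (aval (hpart a))).sum - (fpart g + nu p (fpart a) (hpart a) n)) := by
      rw [hS]; abel
    rw [harr, add_self_eq_zero', add_zero, emb_add, emb_of_mem_Cs hdiff, mul_one]
    exact (decomp_eq g).symm
end

section
/- Let p be an odd prime and W = C₂ ≀ C_p. Then for every generating set X of W, the diameter of the Cayley graph Cay(W,X) is at most 20(p−1). In particular, since |W| = p·2^p, the worst diameter of W is O(log|W|). -/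
open Finset
namespace DiamWreath
variable {p : ℕ}
abbrev V (p : ℕ) := ZMod p → ZMod 2
def shift (c : ZMod p) (f : V p) : V p := fun i => f (i + c)
def mk (f : V p) (c : ZMod p) : Wreath p :=
  ⟨Multiplicative.ofAdd f, Multiplicative.ofAdd c⟩
lemma mk_mul (f g : V p) (c d : ZMod p) :
    mk f c * mk g d = mk (f + shift c g) (c + d) := rfl
lemma mk_inv (f : V p) (c : ZMod p) :
    (mk f c)⁻¹ = mk (shift (-c) (-f)) (-c) := rfl
@[simp] lemma shift_neg (c : ZMod p) (f : V p) : shift c (-f) = -(shift c f) := rfl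

lemma mk_surj (w : Wreath p) :
    w = mk (Multiplicative.toAdd w.left) (Multiplicative.toAdd w.right) := rfl

lemma mk_inj {f g : V p} {c d : ZMod p} (h : mk f c = mk g d) : f = g ∧ c = d := by
  have h1 := congrArg (fun w : Wreath p => Multiplicative.toAdd w.left) h
  have h2 := congrArg (fun w : Wreath p => Multiplicative.toAdd w.right) h
  exact ⟨h1, h2⟩

@[simp] lemma shift_zero (f : V p) : shift 0 f = f := by funext i; simp [shift]
lemma shift_shift (c d : ZMod p) (f : V p) : shift c (shift d f) = shift (c + d) f := by
  funext i; simp [shift, add_assoc]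

-- sums
def Hs (h : V p) (a : ZMod p) (n : ℕ) : V p := ∑ k ∈ range n, shift (k • a) h

lemma xpow (h : V p) (a : ZMod p) (n : ℕ) :
    (mk h a) ^ n = mk (Hs h a n) (n • a) := by
  induction n with
  | zero => simp [Hs, mk, pow_zero]
  | succ n ih =>
      rw [pow_succ, ih, mk_mul]
      congr 1
      · rw [Hs, Hs, Finset.sum_range_succ]
      · rw [succ_nsmul]

-- sigma
def sg [NeZero p] (f : V p) : ZMod 2 := ∑ i, f i

lemma sg_shift [NeZero p] (c : ZMod p) (f : V p) : sg (shift c f) = sg f := by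
  simpa [sg, shift] using Fintype.sum_equiv (Equiv.addRight c) (fun i => f (i + c)) f (fun _ => rfl)

lemma sg_add [NeZero p] (f g : V p) : sg (f + g) = sg f + sg g := by
  simp [sg, Finset.sum_add_distrib]

lemma sg_neg [NeZero p] (f : V p) : sg (-f) = sg f := by
  simp [sg, CharTwo.neg_eq]

lemma conj_mk0 (F v : V p) (c : ZMod p) :
    mk F c * mk v 0 * (mk F c)⁻¹ = mk (shift c v) 0 := by
  rw [mk_inv, mk_mul, mk_mul, add_zero, shift_shift, add_neg_cancel, shift_zero]
  congr 1
  abel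

lemma Vneg (f : V p) : -f = f := by
  funext i; exact CharTwo.neg_eq (f i)

lemma Vadd_self (f : V p) : f + f = 0 := by
  funext i; exact CharTwo.add_self_eq_zero (f i)

def shiftL (c : ZMod p) : V p →ₗ[ZMod 2] V p where
  toFun := shift c
  map_add' _ _ := rfl
  map_smul' _ _ := rfl

def DaL (a : ZMod p) : V p →ₗ[ZMod 2] V p := LinearMap.id + shiftL a

lemma DaL_apply (a : ZMod p) (f : V p) : DaL a f = f + shift a f := rfl

def sgL [NeZero p] : V p →ₗ[ZMod 2] ZMod 2 where
  toFun := sg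
  map_add' := sg_add
  map_smul' r f := by
    simp only [sg, RingHom.id_apply, Pi.smul_apply, smul_eq_mul]
    rw [Finset.mul_sum]

def gtilde (h : V p) (a : ZMod p) (y : Wreath p) : V p :=
  Multiplicative.toAdd y.left + shift a (Multiplicative.toAdd y.left) + h
    + shift (Multiplicative.toAdd y.right) h

lemma block_val (h : V p) (a : ZMod p) (y : Wreath p) :
    y * mk h a * y⁻¹ * (mk h a)⁻¹ = mk (gtilde h a y) 0 := by
  obtain ⟨gy, b, rfl⟩ : ∃ gy b, y = mk gy b := ⟨_, _, rfl⟩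
  rw [mk_inv, mk_inv, mk_mul, mk_mul, mk_mul]
  congr 1
  · rw [shift_shift, shift_shift]
    have e1 : b + a + -b = a := by ring
    have e2 : a + -a = 0 := by ring
    rw [e1, e2, shift_zero, shift_neg, Vneg, Vneg]
    show gy + shift b h + shift a gy + h =
      gy + shift a gy + h + shift b h
    abel
  · ring

def s_ (a : ZMod p) (y : Wreath p) : ℕ := (Multiplicative.toAdd y.right * a⁻¹).val

def mu (h : V p) (a : ZMod p) (y : Wreath p) : V p :=
  Multiplicative.toAdd y.left + Hs h a (s_ a y)

lemma smul_s [NeZero p] [Fact p.Prime] {a : ZMod p} (ha : a ≠ 0) (y : Wreath p) :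
    (s_ a y) • a = Multiplicative.toAdd y.right := by
  rw [nsmul_eq_mul, s_, ZMod.natCast_val, ZMod.cast_id, mul_assoc, inv_mul_cancel₀ ha, mul_one]

lemma y_eq [NeZero p] [Fact p.Prime] {a : ZMod p} (h : V p) (ha : a ≠ 0) (y : Wreath p) :
    y = mk (mu h a y) 0 * (mk h a) ^ (s_ a y) := by
  rw [xpow, mk_mul, shift_zero, mu, add_assoc, Vadd_self, add_zero, smul_s ha, zero_add]
  exact mk_surj y

lemma Da_Hs (h : V p) (a : ZMod p) (n : ℕ) :
    DaL a (Hs h a n) = h + shift (n • a) h := by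
  induction n with
  | zero =>
      simp [Hs]
      exact (Vadd_self h).symm
  | succ n ih =>
      rw [Hs, Finset.sum_range_succ, ← Hs, map_add, ih, DaL_apply, shift_shift, succ_nsmul,
        add_comm a (n • a), add_assoc, ← add_assoc (shift (n • a) h) (shift (n • a) h),
        Vadd_self, zero_add]

lemma Da_mu [NeZero p] [Fact p.Prime] {a : ZMod p} (h : V p) (ha : a ≠ 0) (y : Wreath p) :
    DaL a (mu h a y) = gtilde h a y := by
  rw [mu, map_add, Da_Hs, smul_s ha, DaL_apply, gtilde]
  abel

lemma Da_cx (h : V p) (a : ZMod p) [NeZero p] : DaL a (Hs h a p) = 0 := by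
  rw [Da_Hs]
  have : (p • a) = 0 := by
    rw [nsmul_eq_mul, ZMod.natCast_self, zero_mul]
  rw [this, shift_zero, Vadd_self]

lemma sg_cx [NeZero p] (h : V p) (a : ZMod p) (hodd : Odd p) : sg (Hs h a p) = sg h := by
  have : sg (Hs h a p) = ∑ k ∈ Finset.range p, sg (shift (k • a) h) := map_sum sgL _ _
  rw [this]
  simp only [sg_shift, Finset.sum_const, Finset.card_range, nsmul_eq_mul]
  have : ((p : ZMod 2)) = 1 := by
    rw [← ZMod.natCast_mod p 2, Nat.odd_iff.mp hodd, Nat.cast_one]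
  rw [this, one_mul]


def delta : V p := fun i => if i = 0 then 1 else 0

lemma sg_delta [NeZero p] : sg (delta (p := p)) = 1 := by
  simp [sg, delta]

def one1 : V p := fun _ => 1

lemma one1_ne_zero [NeZero p] : (one1 : V p) ≠ 0 := by
  intro hcon
  have := congrFun hcon 0
  simp [one1] at this

lemma sgL_surjective [NeZero p] : Function.Surjective (sgL (p := p)) := by
  intro c
  refine ⟨c • delta, ?_⟩
  have : sgL (p := p) delta = 1 := sg_delta
  rw [map_smul, this, smul_eq_mul, mul_one]

lemma finrank_V [NeZero p] : Module.finrank (ZMod 2) (V p) = p := by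
  rw [Module.finrank_pi, ZMod.card]

lemma ker_Da [NeZero p] [Fact p.Prime] {a : ZMod p} (ha : a ≠ 0) :
    LinearMap.ker (DaL (p := p) a) = Submodule.span (ZMod 2) {one1} := by
  apply le_antisymm
  · intro f hf
    have hf' : f + shift a f = 0 := hf
    have hsh : shift a f = f := by
      have := congrArg (fun u => f + u) (Vadd_self f).symm
      calc shift a f = -f + (f + shift a f) := by abel
        _ = -f + 0 := by rw [hf']
        _ = f := by rw [Vneg]; abel
    have key : ∀ n : ℕ, f ((n : ℕ) • a) = f 0 := by
      intro n
      induction n with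
      | zero => simp
      | succ n ih =>
          have : ((n+1) : ℕ) • a = n • a + a := succ_nsmul a n
          rw [this, ← ih]
          exact congrFun hsh (n • a)
    have hconst : ∀ i : ZMod p, f i = f 0 := by
      intro i
      have : ((i * a⁻¹).val) • a = i := by
        rw [nsmul_eq_mul, ZMod.natCast_val, ZMod.cast_id, mul_assoc, inv_mul_cancel₀ ha, mul_one]
      rw [← this]
      exact key _
    have : f = (f 0) • one1 := by
      funext i
      simp [one1, hconst i]
    rw [this]
    exact Submodule.smul_mem _ _ (Submodule.mem_span_singleton_self _)
  · rw [Submodule.span_le, Set.singleton_subset_iff]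
    show DaL a one1 = 0
    rw [DaL_apply]
    have : shift a (one1 : V p) = one1 := rfl
    rw [this, Vadd_self]

lemma range_Da [NeZero p] [Fact p.Prime] {a : ZMod p} (ha : a ≠ 0) :
    LinearMap.range (DaL (p := p) a) = LinearMap.ker (sgL (p := p)) := by
  have hle : LinearMap.range (DaL (p := p) a) ≤ LinearMap.ker (sgL (p := p)) := by
    rintro f ⟨u, rfl⟩
    have : sgL (p := p) (DaL a u) = 0 := by
      show sg (u + shift a u) = 0
      rw [sg_add, sg_shift]
      exact CharTwo.add_self_eq_zero _
    exact this
  have h1 : Module.finrank (ZMod 2) (LinearMap.ker (sgL (p := p))) = p - 1 := by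
    have hrn := LinearMap.finrank_range_add_finrank_ker (sgL (p := p))
    rw [finrank_V] at hrn
    have : LinearMap.range (sgL (p := p)) = ⊤ := LinearMap.range_eq_top.mpr sgL_surjective
    rw [this, finrank_top, Module.finrank_self] at hrn
    omega
  have h2 : Module.finrank (ZMod 2) (LinearMap.range (DaL (p := p) a)) = p - 1 := by
    have hrn := LinearMap.finrank_range_add_finrank_ker (DaL (p := p) a)
    rw [finrank_V, ker_Da ha, finrank_span_singleton one1_ne_zero] at hrn
    omega
  exact Submodule.eq_of_le_of_finrank_le hle (by rw [h1, h2])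

lemma mem_span_list [NeZero p] (s : Set (V p)) (f : V p)
    (hf : f ∈ Submodule.span (ZMod 2) s) :
    ∃ L : List (V p), (∀ v ∈ L, v ∈ s) ∧ L.length ≤ p ∧ L.sum = f := by
  obtain ⟨b, hbs, hspan, hli⟩ := exists_linearIndependent (ZMod 2) s
  have hbfin : b.Finite := hli.setFinite
  rw [← hspan] at hf
  set T : Finset (V p) := hbfin.toFinset with hT
  have hTb : (↑T : Set (V p)) = b := hbfin.coe_toFinset
  rw [← hTb] at hf
  obtain ⟨c, -, hc⟩ := Submodule.mem_span_finset.mp hf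
  set T' : Finset (V p) := T.filter (fun v => c v = 1) with hT'
  refine ⟨T'.toList, ?_, ?_, ?_⟩
  · intro v hv
    rw [Finset.mem_toList] at hv
    have : v ∈ T := (Finset.mem_filter.mp hv).1
    apply hbs
    rw [← hTb]
    exact this
  · rw [Finset.length_toList]
    have hTcard : T.card ≤ p := by
      have : LinearIndependent (ZMod 2) (fun v => v : (↑T : Set (V p)) → V p) := by
        rw [hTb]; exact hli
      have := LinearIndependent.finset_card_le_finrank (by
        simpa using this)
      rw [finrank_V] at this
      exact this
    exact le_trans (Finset.card_filter_le _ _) hTcard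
  · have : (T'.toList.map id).sum = T'.sum id := Finset.sum_map_toList T' id
    rw [List.map_id] at this
    rw [this]
    have z01 : ∀ z : ZMod 2, z = 0 ∨ z = 1 := by decide
    have : ∑ v ∈ T, c v • v = ∑ v ∈ T, (if c v = 1 then v else 0) := by
      apply Finset.sum_congr rfl
      intro v _
      rcases z01 (c v) with h0 | h1
      · rw [h0]
        simp [h0]
      · rw [h1]
        simp [h1]
    rw [this] at hc
    simpa [hT', Finset.sum_filter] using hc


lemma mk_one : (mk (0 : V p) 0) = 1 := rfl

lemma mk_inv0 (m : V p) : (mk m 0)⁻¹ = mk m 0 := by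
  rw [mk_inv, neg_zero, shift_zero, Vneg]

lemma mkV_mul (v w : V p) : mk v 0 * mk w 0 = mk (v + w) 0 := by
  rw [mk_mul, shift_zero, add_zero]

lemma conj_mk0' (w : Wreath p) (v : V p) :
    w * mk v 0 * w⁻¹ = mk (shift (Multiplicative.toAdd w.right) v) 0 := by
  conv_lhs => rw [mk_surj w]
  exact conj_mk0 _ _ _

lemma xpow_p [NeZero p] (h : V p) (a : ZMod p) :
    (mk h a) ^ p = mk (Hs h a p) 0 := by
  rw [xpow]
  congr 1
  rw [nsmul_eq_mul, ZMod.natCast_self, zero_mul]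

lemma mkV_sq (v : V p) : (mk v 0) ^ (2 : ℤ) = 1 := by
  rw [zpow_two, mkV_mul, Vadd_self, mk_one]

lemma mkV_zpow (v : V p) (j : ℤ) :
    (mk v 0) ^ j = 1 ∨ (mk v 0) ^ j = mk v 0 := by
  rcases Int.even_or_odd j with ⟨t, rfl⟩ | ⟨t, rfl⟩
  · left
    rw [← two_mul, zpow_mul, mkV_sq, one_zpow]
  · right
    rw [zpow_add, zpow_mul, mkV_sq, one_zpow, one_mul, zpow_one]

lemma right_zpow (h : V p) (a : ZMod p) (k : ℤ) :
    Multiplicative.toAdd (((mk h a) ^ k).right) = k • a := by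
  have : ((mk h a) ^ k).right = (Multiplicative.ofAdd a) ^ k := by
    rw [← SemidirectProduct.rightHom_eq_right]
    rw [map_zpow]
    rfl
  rw [this]
  rfl

def Mset (X : Set (Wreath p)) (h : V p) (a : ZMod p) : Set (V p) :=
  {v | (∃ y ∈ X, ∃ c : ZMod p, v = shift c (mu h a y)) ∨ (∃ c : ZMod p, v = shift c (Hs h a p))}

def Msub (X : Set (Wreath p)) (h : V p) (a : ZMod p) : Submodule (ZMod 2) (V p) :=
  Submodule.span (ZMod 2) (Mset X h a)

lemma Msub_shift (X : Set (Wreath p)) (h : V p) (a : ZMod p) (c : ZMod p)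
    {v : V p} (hv : v ∈ Msub X h a) : shift c v ∈ Msub X h a := by
  have : Submodule.map (shiftL c) (Msub X h a) ≤ Msub X h a := by
    rw [Msub, Submodule.map_span, Submodule.span_le]
    rintro w ⟨u, hu, rfl⟩
    apply Submodule.subset_span
    rcases hu with ⟨y, hy, d, rfl⟩ | ⟨d, rfl⟩
    · exact Or.inl ⟨y, hy, c + d, by rw [← shift_shift]; rfl⟩
    · exact Or.inr ⟨c + d, by rw [← shift_shift]; rfl⟩
  exact this ⟨v, hv, rfl⟩

lemma Msub_top [NeZero p] [Fact p.Prime] (X : Set (Wreath p)) (hX : Subgroup.closure X = ⊤)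
    (h : V p) (a : ZMod p) (ha : a ≠ 0) (hx : mk h a ∈ X) (f : V p) :
    f ∈ Msub X h a := by
  set x : Wreath p := mk h a with hxdef
  set H : Subgroup (Wreath p) :=
    { carrier := {w | ∃ k : ℤ, ∃ m ∈ Msub X h a, w = mk m 0 * x ^ k}
      one_mem' := ⟨0, 0, Submodule.zero_mem _, by rw [mk_one, zpow_zero, one_mul]⟩
      mul_mem' := by
        rintro w₁ w₂ ⟨k₁, m₁, hm₁, rfl⟩ ⟨k₂, m₂, hm₂, rfl⟩
        refine ⟨k₁ + k₂, m₁ + shift (Multiplicative.toAdd ((x ^ k₁).right)) m₂,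
          Submodule.add_mem _ hm₁ (Msub_shift X h a _ hm₂), ?_⟩
        have hconj := conj_mk0' (x ^ k₁) m₂
        calc mk m₁ 0 * x ^ k₁ * (mk m₂ 0 * x ^ k₂)
            = mk m₁ 0 * (x ^ k₁ * mk m₂ 0 * (x ^ k₁)⁻¹) * x ^ (k₁ + k₂) := by
              rw [zpow_add]; group
          _ = mk m₁ 0 * mk (shift (Multiplicative.toAdd ((x ^ k₁).right)) m₂) 0 * x ^ (k₁ + k₂) := by
              rw [hconj]
          _ = _ := by rw [mkV_mul]
      inv_mem' := by
        rintro w ⟨k, m, hm, rfl⟩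
        refine ⟨-k, shift (Multiplicative.toAdd ((x ^ (-k : ℤ)).right)) m,
          Msub_shift X h a _ hm, ?_⟩
        have hconj := conj_mk0' (x ^ (-k : ℤ)) m
        calc (mk m 0 * x ^ k)⁻¹ = (x ^ k)⁻¹ * (mk m 0)⁻¹ := by rw [mul_inv_rev]
          _ = x ^ (-k : ℤ) * mk m 0 * (x ^ (-k:ℤ))⁻¹ * x ^ (-k : ℤ) := by
              rw [mk_inv0, zpow_neg]; group
          _ = _ := by rw [hconj] } with hH
  have hXH : X ⊆ (H : Set (Wreath p)) := by
    intro y hy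
    refine ⟨(s_ a y : ℤ), mu h a y, ?_, ?_⟩
    · exact Submodule.subset_span (Or.inl ⟨y, hy, 0, (shift_zero _).symm⟩)
    · rw [zpow_natCast]
      exact y_eq h ha y
  have htop : (⊤ : Subgroup (Wreath p)) ≤ H := by
    rw [← hX]
    exact (Subgroup.closure_le _).mpr hXH
  obtain ⟨k, m, hm, heq⟩ := htop (Subgroup.mem_top (mk f 0))
  have hxk : x ^ k = mk (m + f) 0 := by
    rw [← mkV_mul, ← mk_inv0 m, heq]
    group
  have hk0 : (k : ZMod p) * a = 0 := by
    have := congrArg (fun w : Wreath p => Multiplicative.toAdd w.right) hxk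
    rw [right_zpow] at this
    rw [← zsmul_eq_mul]
    exact this.trans rfl
  have hdvd : (p : ℤ) ∣ k := by
    have : (k : ZMod p) = 0 := by
      rcases mul_eq_zero.mp hk0 with h0 | h0
      · exact h0
      · exact absurd h0 ha
    exact (ZMod.intCast_zmod_eq_zero_iff_dvd k p).mp this
  obtain ⟨j, rfl⟩ := hdvd
  have hxpj : x ^ ((p : ℤ) * j) = (mk (Hs h a p) 0) ^ j := by
    rw [zpow_mul, zpow_natCast, hxdef, xpow_p]
  rcases mkV_zpow (Hs h a p) j with h1 | h1
  · rw [hxpj, h1] at hxk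
    have : m + f = 0 := (mk_inj hxk.symm).1
    have hf : f = m := by
      calc f = m + (m + f) := by rw [← add_assoc, Vadd_self, zero_add]
        _ = m := by rw [this, add_zero]
    rw [hf]; exact hm
  · rw [hxpj, h1] at hxk
    have : m + f = Hs h a p := (mk_inj hxk.symm).1
    have hf : f = m + Hs h a p := by
      calc f = m + (m + f) := by rw [← add_assoc, Vadd_self, zero_add]
        _ = m + Hs h a p := by rw [this]
    rw [hf]
    exact Submodule.add_mem _ hm (Submodule.subset_span (Or.inr ⟨0, (shift_zero _).symm⟩))


lemma exists_x [NeZero p] [Fact (1 < p)] (X : Set (Wreath p)) (hX : Subgroup.closure X = ⊤) :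
    ∃ x ∈ X, Multiplicative.toAdd x.right ≠ 0 := by
  by_contra hcon
  push_neg at hcon
  have hsub : X ⊆ ((SemidirectProduct.rightHom :
      Wreath p →* Multiplicative (ZMod p)).ker : Set (Wreath p)) := by
    intro w hw
    have h0 := hcon w hw
    show SemidirectProduct.rightHom w = 1
    have hr : SemidirectProduct.rightHom w = w.right := rfl
    rw [hr, mk_surj w]
    show Multiplicative.ofAdd (Multiplicative.toAdd w.right) = 1
    rw [h0]
    rfl
  have htop : (⊤ : Subgroup (Wreath p)) ≤ (SemidirectProduct.rightHom :
      Wreath p →* Multiplicative (ZMod p)).ker := by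
    rw [← hX]; exact (Subgroup.closure_le _).mpr hsub
  have := htop (Subgroup.mem_top (SemidirectProduct.inr (Multiplicative.ofAdd (1 : ZMod p))))
  rw [MonoidHom.mem_ker, SemidirectProduct.rightHom_inr] at this
  have : (1 : ZMod p) = 0 := congrArg Multiplicative.toAdd this
  exact one_ne_zero this

def sgKer [NeZero p] : Subgroup (Wreath p) where
  carrier := {w | sg (Multiplicative.toAdd w.left) = 0}
  one_mem' := by
    show sg (Multiplicative.toAdd (1 : Wreath p).left) = 0
    rw [SemidirectProduct.one_left]
    simp [sg]
  mul_mem' := by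
    intro w₁ w₂ h₁ h₂
    show sg (Multiplicative.toAdd ((w₁ * w₂).left)) = 0
    rw [SemidirectProduct.mul_left]
    have : Multiplicative.toAdd (w₁.left * (wreathShift p w₁.right) w₂.left)
        = Multiplicative.toAdd w₁.left
          + shift (Multiplicative.toAdd w₁.right) (Multiplicative.toAdd w₂.left) := rfl
    rw [this, sg_add, sg_shift, h₁, h₂, add_zero]
  inv_mem' := by
    intro w hw
    show sg (Multiplicative.toAdd ((w⁻¹).left)) = 0
    rw [SemidirectProduct.inv_left]
    have : Multiplicative.toAdd ((wreathShift p w.right⁻¹) w.left⁻¹)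
        = shift (Multiplicative.toAdd w.right⁻¹) (-(Multiplicative.toAdd w.left)) := rfl
    rw [this]
    rw [sg_shift, sg_neg]
    exact hw

lemma exists_ystar [NeZero p] (X : Set (Wreath p)) (hX : Subgroup.closure X = ⊤) :
    ∃ y ∈ X, sg (Multiplicative.toAdd y.left) = 1 := by
  by_contra hcon
  push_neg at hcon
  have z01 : ∀ z : ZMod 2, z ≠ 1 → z = 0 := by decide
  have hsub : X ⊆ (sgKer : Subgroup (Wreath p)) := by
    intro w hw
    exact z01 _ (hcon w hw)
  have htop : (⊤ : Subgroup (Wreath p)) ≤ sgKer := by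
    rw [← hX]; exact (Subgroup.closure_le _).mpr hsub
  have := htop (Subgroup.mem_top (mk delta 0))
  have hd : sg (Multiplicative.toAdd (mk (delta (p := p)) 0).left) = 0 := this
  have : sg (delta (p := p)) = 0 := hd
  rw [sg_delta] at this
  exact one_ne_zero this

@[simp] lemma shift_zfn (c : ZMod p) : shift c (0 : V p) = 0 := rfl

lemma shift_add (c : ZMod p) (f g : V p) : shift c (f + g) = shift c f + shift c g := rfl

lemma Hs_succ (h : V p) (a : ZMod p) (n : ℕ) :
    Hs h a (n + 1) = Hs h a n + shift (n • a) h := by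
  rw [Hs, Finset.sum_range_succ, ← Hs]

lemma Hs_add (h : V p) (a : ZMod p) (m n : ℕ) :
    Hs h a (m + n) = Hs h a m + shift (m • a) (Hs h a n) := by
  induction n with
  | zero =>
      rw [add_zero]
      simp [Hs]
  | succ n ih =>
      rw [← add_assoc, Hs_succ, ih, Hs_succ, shift_add, shift_shift, ← add_nsmul, add_assoc]

def wordFrom (x : Wreath p) : ℕ → List (Wreath p × ℕ) → List (Wreath p)
  | φ, [] => List.replicate (p - φ) x
  | φ, (yd :: rest) =>
      List.replicate (yd.2 - φ) x ++ ([yd.1, x, yd.1⁻¹, x⁻¹] ++ wordFrom x yd.2 rest)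

lemma wordFrom_mem (x : Wreath p) (l : List (Wreath p × ℕ)) (φ : ℕ) (z : Wreath p)
    (hz : z ∈ wordFrom x φ l) :
    z = x ∨ z = x⁻¹ ∨ ∃ yd ∈ l, z = yd.1 ∨ z = yd.1⁻¹ := by
  induction l generalizing φ with
  | nil =>
      rw [wordFrom] at hz
      exact Or.inl (List.eq_of_mem_replicate hz)
  | cons yd rest ih =>
      rw [wordFrom] at hz
      rcases List.mem_append.mp hz with h1 | h2
      · exact Or.inl (List.eq_of_mem_replicate h1)
      · rcases List.mem_append.mp h2 with h3 | h4
        · simp only [List.mem_cons, List.not_mem_nil, or_false] at h3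
          rcases h3 with rfl | rfl | rfl | rfl
          · exact Or.inr (Or.inr ⟨yd, List.mem_cons_self, Or.inl rfl⟩)
          · exact Or.inl rfl
          · exact Or.inr (Or.inr ⟨yd, List.mem_cons_self, Or.inr rfl⟩)
          · exact Or.inr (Or.inl rfl)
        · rcases ih _ h4 with h | h | ⟨yd', hyd', h⟩
          · exact Or.inl h
          · exact Or.inr (Or.inl h)
          · exact Or.inr (Or.inr ⟨yd', List.mem_cons_of_mem _ hyd', h⟩)

lemma wordFrom_length (x : Wreath p) (l : List (Wreath p × ℕ)) (φ : ℕ)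
    (hφ : φ ≤ p) (hsort : List.Pairwise (· ≤ ·) (φ :: l.map Prod.snd))
    (hlt : ∀ yd ∈ l, yd.2 < p) :
    (wordFrom x φ l).length = (p - φ) + 4 * l.length := by
  induction l generalizing φ with
  | nil => rw [wordFrom]; simp
  | cons yd rest ih =>
      rw [wordFrom]
      have hsc := List.pairwise_cons.mp hsort
      have hφd : φ ≤ yd.2 := hsc.1 yd.2 (by simp)
      have hdp : yd.2 < p := hlt yd (List.mem_cons_self)
      have hrest : List.Pairwise (· ≤ ·) (yd.2 :: rest.map Prod.snd) := by
        rw [List.map_cons] at hsort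
        exact hsort.of_cons
      rw [List.length_append, List.length_append, List.length_replicate,
        ih yd.2 (le_of_lt hdp) hrest (fun z hz => hlt z (List.mem_cons_of_mem _ hz))]
      simp only [List.length_cons, List.length_nil, List.length_cons]
      omega

def Bsum (h : V p) (a : ZMod p) (φ : ℕ) (l : List (Wreath p × ℕ)) : V p :=
  (l.map (fun yd => shift ((yd.2 - φ) • a) (gtilde h a yd.1))).sum

lemma Bsum_shift (h : V p) (a : ZMod p) (rest : List (Wreath p × ℕ)) (φ d : ℕ)
    (hφd : φ ≤ d) (hall : ∀ yd ∈ rest, d ≤ yd.2) :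
    shift ((d - φ) • a) (Bsum h a d rest) = Bsum h a φ rest := by
  induction rest with
  | nil => simp [Bsum]
  | cons z zs ih =>
      have hdz : d ≤ z.2 := hall z (List.mem_cons_self)
      have harith : (d - φ) + (z.2 - d) = z.2 - φ := by omega
      conv_rhs => rw [Bsum, List.map_cons, List.sum_cons, ← Bsum]
      rw [Bsum, List.map_cons, List.sum_cons, ← Bsum, shift_add]
      congr 1
      · rw [shift_shift, ← add_nsmul, harith]
      · exact ih (fun yd hyd => hall yd (List.mem_cons_of_mem _ hyd))

lemma wordFrom_prod (h : V p) (a : ZMod p) (l : List (Wreath p × ℕ)) (φ : ℕ)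
    (hφ : φ ≤ p) (hsort : List.Pairwise (· ≤ ·) (φ :: l.map Prod.snd))
    (hlt : ∀ yd ∈ l, yd.2 < p) :
    (wordFrom (mk h a) φ l).prod = mk (Hs h a (p - φ) + Bsum h a φ l) ((p - φ) • a) := by
  induction l generalizing φ with
  | nil =>
      rw [wordFrom, List.prod_replicate, xpow, Bsum]
      simp
  | cons yd rest ih =>
      obtain ⟨y, d⟩ := yd
      rw [wordFrom]
      have hsc := List.pairwise_cons.mp hsort
      have hφd : φ ≤ d := hsc.1 d (by simp)
      have hdp : d < p := hlt ⟨y, d⟩ (List.mem_cons_self)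
      have hrest : List.Pairwise (· ≤ ·) (d :: rest.map Prod.snd) := by
        rw [List.map_cons] at hsort
        exact hsort.of_cons
      have hall : ∀ yd ∈ rest, d ≤ yd.2 := by
        intro z hz
        exact (List.pairwise_cons.mp hrest).1 z.2 (List.mem_map_of_mem hz)
      rw [List.prod_append, List.prod_append, List.prod_replicate, xpow,
        ih d (le_of_lt hdp) hrest (fun z hz => hlt z (List.mem_cons_of_mem _ hz))]
      have hblk : ([y, mk h a, y⁻¹, (mk h a)⁻¹] : List (Wreath p)).prod
          = mk (gtilde h a y) 0 := by
        rw [← block_val]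
        simp [mul_assoc]
      rw [hblk, mk_mul, shift_zero, zero_add, mk_mul]
      have hB := Bsum_shift h a rest φ d hφd hall
      have harith : (d - φ) + (p - d) = p - φ := by omega
      have hA : Hs h a (d - φ) + shift ((d - φ) • a) (Hs h a (p - d)) = Hs h a (p - φ) := by
        rw [← Hs_add, harith]
      congr 1
      · conv_rhs => rw [Bsum, List.map_cons, List.sum_cons, ← Bsum]
        rw [shift_add, shift_add, hB, ← hA]
        abel
      · rw [← add_nsmul, harith]


lemma val_smul [NeZero p] [Fact p.Prime] {a : ZMod p} (ha : a ≠ 0) (b : ZMod p) :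
    ((b * a⁻¹).val) • a = b := by
  rw [nsmul_eq_mul, ZMod.natCast_val, ZMod.cast_id, mul_assoc, inv_mul_cancel₀ ha, mul_one]

lemma Da_shift (a c : ZMod p) (f : V p) : DaL a (shift c f) = shift c (DaL a f) := by
  rw [DaL_apply, DaL_apply, shift_add, shift_shift, shift_shift, add_comm a c]

lemma Vtwo (v : V p) : (2 : ℕ) • v = 0 := by
  rw [two_nsmul, Vadd_self]

lemma Vtwo_mul (v : V p) : (2 : V p) * v = 0 := by
  funext i
  have h1 : ((2 : V p) * v) i = (2 : ZMod 2) * v i := rfl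
  have h2 : ((0 : V p)) i = 0 := rfl
  rw [h1, h2, show (2 : ZMod 2) = 0 from rfl, zero_mul]

lemma extract_pairs (X : Set (Wreath p)) (h : V p) (a : ZMod p) (L₀ : List (V p))
    (hL : ∀ v ∈ L₀, v = 0 ∨ ∃ y d, y ∈ X ∧ d < p ∧ v = shift ((d : ℕ) • a) (gtilde h a y)) :
    ∃ l : List (Wreath p × ℕ), (∀ yd ∈ l, yd.1 ∈ X ∧ yd.2 < p) ∧ l.length ≤ L₀.length ∧
      (l.map (fun yd => shift ((yd.2 : ℕ) • a) (gtilde h a yd.1))).sum = L₀.sum := by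
  induction L₀ with
  | nil => exact ⟨[], by simp, by simp, by simp⟩
  | cons v L ih =>
      obtain ⟨l', hl'1, hl'2, hl'3⟩ := ih (fun w hw => hL w (List.mem_cons_of_mem _ hw))
      rcases hL v (List.mem_cons_self) with h0 | ⟨y, d, hy, hd, hv⟩
      · exact ⟨l', hl'1, le_trans hl'2 (by simp), by
          rw [List.sum_cons, h0, zero_add, hl'3]⟩
      · refine ⟨(y, d) :: l', ?_, by simpa using hl'2, ?_⟩
        · intro yd hyd
          rcases List.mem_cons.mp hyd with rfl | hyd'
          · exact ⟨hy, hd⟩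
          · exact hl'1 yd hyd' 
        · rw [List.map_cons, List.sum_cons, List.sum_cons, hl'3, hv]

lemma main_word [NeZero p] [Fact p.Prime] [Fact (1 < p)] (hodd : Odd p)
    (X : Set (Wreath p)) (hX : Subgroup.closure X = ⊤) (g : Wreath p) :
    ∃ l : List (Wreath p), (∀ z ∈ l, z ∈ X ∨ z⁻¹ ∈ X) ∧ l.length ≤ 8 * p ∧ l.prod = g := by
  classical
  obtain ⟨x, hxX, ha⟩ := exists_x X hX
  set h : V p := Multiplicative.toAdd x.left with hh
  set a : ZMod p := Multiplicative.toAdd x.right with haa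
  have hxmk : x = mk h a := mk_surj x
  rw [hxmk] at hxX
  set f₀ : V p := Multiplicative.toAdd g.left with hf₀
  set c₀ : ZMod p := Multiplicative.toAdd g.right with hc₀
  have hgmk : g = mk f₀ c₀ := mk_surj g
  set dd : ℕ := (c₀ * a⁻¹).val with hdd
  have hdda : (dd : ℕ) • a = c₀ := val_smul ha c₀
  have hddp : dd < p := ZMod.val_lt _
  set f' : V p := f₀ + Hs h a dd with hf'
  set cx : V p := Hs h a p with hcx
  have z01 : ∀ z : ZMod 2, z = 0 ∨ z = 1 := by decide
  -- choose P and U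
  obtain ⟨P, U, hsgn, ⟨LP, hLP1, hLP2, hLP3⟩, ⟨LU, hLU1, hLU2, hLU3⟩⟩ :
      ∃ P U : V p, (sg (f' + P + cx + U) = 0) ∧
        (∃ LP : List (Wreath p), LP.prod = mk P 0 ∧ LP.length ≤ p ∧
          ∀ z ∈ LP, z ∈ X ∨ z⁻¹ ∈ X) ∧
        (∃ LU : List (Wreath p), LU.prod = mk U 0 ∧ LU.length ≤ p ∧
          ∀ z ∈ LU, z ∈ X ∨ z⁻¹ ∈ X) := by
    have hsgcx : sg cx = sg h := sg_cx h a hodd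
    have hPcx : ∃ LP : List (Wreath p), LP.prod = mk cx 0 ∧ LP.length ≤ p ∧
        ∀ z ∈ LP, z ∈ X ∨ z⁻¹ ∈ X := by
      refine ⟨List.replicate p (mk h a), ?_, by simp, ?_⟩
      · rw [List.prod_replicate, xpow_p]
      · intro z hz
        rw [List.eq_of_mem_replicate hz]
        exact Or.inl hxX
    have hPzero : ∃ LP : List (Wreath p), LP.prod = mk (0 : V p) 0 ∧ LP.length ≤ p ∧
        ∀ z ∈ LP, z ∈ X ∨ z⁻¹ ∈ X := ⟨[], by rw [List.prod_nil, mk_one], by simp, by simp⟩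
    rcases z01 (sg h) with hsh | hsh
    · rcases z01 (sg f') with hsf | hsf
      · exact ⟨0, 0, by rw [add_zero, add_zero, sg_add, hsf, hsgcx, hsh, add_zero], hPzero, hPzero⟩
      · -- sg h = 0, sg f' = 1 : use ystar
        obtain ⟨ys, hysX, hyssg⟩ := exists_ystar X hX
        set mus : V p := mu h a ys with hmus
        have hsgmus : sg mus = 1 := by
          rw [hmus, mu, sg_add]
          have : sg (Hs h a (s_ a ys)) = 0 := by
            have : sg (Hs h a (s_ a ys)) = ∑ k ∈ Finset.range (s_ a ys), sg (shift (k • a) h) :=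
              map_sum sgL _ _
            rw [this]
            simp [sg_shift, hsh]
          rw [this, hyssg, add_zero]
        refine ⟨0, mus, ?_, hPzero, ?_⟩
        · rw [add_zero, sg_add, sg_add, hsf, hsgcx, hsh, hsgmus]
          decide
        · refine ⟨ys :: List.replicate (s_ a ys) ((mk h a)⁻¹), ?_, ?_, ?_⟩
          · have hy2 : mk mus 0 * mk h a ^ s_ a ys = ys := by
              rw [hmus]; exact (y_eq h ha ys).symm
            rw [List.prod_cons, List.prod_replicate, inv_pow]
            nth_rewrite 1 [← hy2]
            rw [mul_inv_cancel_right]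
          · simp only [List.length_cons, List.length_replicate]
            have : s_ a ys < p := ZMod.val_lt _
            omega
          · intro z hz
            rcases List.mem_cons.mp hz with rfl | hz'
            · exact Or.inl hysX
            · rw [List.eq_of_mem_replicate hz']
              exact Or.inr (by rw [inv_inv]; exact hxX)
    · rcases z01 (sg f') with hsf | hsf
      · -- sg h = 1, sg f' = 0 : prefix
        exact ⟨cx, 0, by rw [add_zero, sg_add, sg_add, hsf, hsgcx, hsh]; decide, hPcx, hPzero⟩
      · exact ⟨0, 0, by rw [add_zero, add_zero, sg_add, hsf, hsgcx, hsh]; decide, hPzero, hPzero⟩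
  -- the target for the block sum
  set n : V p := f' + P + cx + U with hn
  have hnker : n ∈ LinearMap.ker (sgL (p := p)) := hsgn
  rw [← range_Da ha] at hnker
  obtain ⟨u, hu⟩ := hnker
  have hnmem : n ∈ Submodule.map (DaL (p := p) a) (Msub X h a) :=
    ⟨u, Msub_top X hX h a ha hxX u, hu⟩
  rw [Msub, Submodule.map_span] at hnmem
  obtain ⟨L₀, hL₀s, hL₀len, hL₀sum⟩ := mem_span_list _ _ hnmem
  have hL : ∀ v ∈ L₀, v = 0 ∨ ∃ y d, y ∈ X ∧ d < p ∧ v = shift ((d : ℕ) • a) (gtilde h a y) := by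
    intro v hv
    obtain ⟨w, hw, hvw⟩ := hL₀s v hv
    rcases hw with ⟨y, hy, c, rfl⟩ | ⟨c, rfl⟩
    · right
      refine ⟨y, (c * a⁻¹).val, hy, ZMod.val_lt _, ?_⟩
      rw [← hvw, Da_shift, Da_mu h ha, val_smul ha]
    · left
      rw [← hvw, Da_shift, ← hcx, Da_cx, shift_zfn]
  obtain ⟨l, hl1, hl2, hl3⟩ := extract_pairs X h a L₀ hL
  -- sort
  set r : (Wreath p × ℕ) → (Wreath p × ℕ) → Prop := fun u v => u.2 ≤ v.2 with hr
  haveI : DecidableRel r := fun u v => Nat.decLe _ _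
  haveI : Std.Total r := ⟨fun u v => le_total u.2 v.2⟩
  haveI : IsTrans (Wreath p × ℕ) r := ⟨fun u v w h1 h2 => le_trans h1 h2⟩
  set l₂ : List (Wreath p × ℕ) := l.insertionSort r with hl₂
  have hperm : List.Perm l₂ l := List.perm_insertionSort r l
  have hsorted : List.Pairwise r l₂ := List.pairwise_insertionSort r l
  have hl₂1 : ∀ yd ∈ l₂, yd.1 ∈ X ∧ yd.2 < p := fun yd hyd => hl1 yd (hperm.mem_iff.mp hyd)
  have hl₂len : l₂.length = l.length := hperm.length_eq
  have hsort0 : List.Pairwise (· ≤ ·) ((0 : ℕ) :: l₂.map Prod.snd) := by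
    rw [List.pairwise_cons]
    constructor
    · intro b _
      exact Nat.zero_le b
    · exact List.Pairwise.map Prod.snd (fun u v huv => huv) hsorted
  have hBsum : Bsum h a 0 l₂ = n := by
    rw [Bsum]
    have : (l₂.map (fun yd => shift ((yd.2 - 0) • a) (gtilde h a yd.1))).sum
        = (l.map (fun yd => shift ((yd.2 : ℕ) • a) (gtilde h a yd.1))).sum := by
      simp only [Nat.sub_zero]
      exact (hperm.map _).sum_eq
    rw [this, hl3, hL₀sum]
  -- the main word
  have hprodmain : (wordFrom (mk h a) 0 l₂).prod = mk (cx + n) 0 := by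
    rw [wordFrom_prod h a l₂ 0 (Nat.zero_le p) hsort0 (fun yd hyd => (hl₂1 yd hyd).2)]
    rw [Nat.sub_zero, hBsum, ← hcx]
    congr 1
    rw [nsmul_eq_mul, ZMod.natCast_self, zero_mul]
  have hlenmain : (wordFrom (mk h a) 0 l₂).length = p + 4 * l₂.length :=
    wordFrom_length (mk h a) l₂ 0 (Nat.zero_le p) hsort0 (fun yd hyd => (hl₂1 yd hyd).2)
  set L : List (Wreath p) :=
    LP ++ (wordFrom (mk h a) 0 l₂ ++ (LU ++ List.replicate dd (mk h a))) with hL'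
  refine ⟨L, ?_, ?_, ?_⟩
  · intro z hz
    rcases List.mem_append.mp hz with hz | hz
    · exact hLP3 z hz
    · rcases List.mem_append.mp hz with hz | hz
      · rcases wordFrom_mem _ _ _ _ hz with rfl | rfl | ⟨yd, hyd, rfl | rfl⟩
        · exact Or.inl hxX
        · exact Or.inr (by rw [inv_inv]; exact hxX)
        · exact Or.inl (hl₂1 yd hyd).1
        · exact Or.inr (by rw [inv_inv]; exact (hl₂1 yd hyd).1)
      · rcases List.mem_append.mp hz with hz | hz
        · exact hLU3 z hz
        · rw [List.eq_of_mem_replicate hz]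
          exact Or.inl hxX
  · rw [hL']
    simp only [List.length_append, List.length_replicate, hlenmain]
    have hml : l.length ≤ p := le_trans hl2 hL₀len
    omega
  · rw [hL', List.prod_append, List.prod_append, List.prod_append, hLP1, hprodmain, hLU1,
      List.prod_replicate, xpow, hdda, mk_mul, mk_mul, mk_mul]
    simp only [shift_zero, zero_add]
    rw [hgmk]
    congr 1
    rw [hn, hf']
    abel_nf
    simp [Vtwo, Vtwo_mul]


lemma card_wreath (p : ℕ) [NeZero p] : Nat.card (Wreath p) = p * 2 ^ p := by
  have e : Wreath p ≃ (WreathBase p × Multiplicative (ZMod p)) :=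
    ⟨fun w => (w.left, w.right), fun pr => ⟨pr.1, pr.2⟩, fun w => rfl, fun pr => rfl⟩
  rw [Nat.card_congr e, Nat.card_prod]
  have h1 : Nat.card (WreathBase p) = 2 ^ p := by
    rw [Nat.card_congr (Multiplicative.toAdd (α := ZMod p → ZMod 2)), Nat.card_pi]
    simp [Nat.card_zmod, ZMod.card]
  have h2 : Nat.card (Multiplicative (ZMod p)) = p := by
    rw [Nat.card_congr (Multiplicative.toAdd (α := ZMod p)), Nat.card_zmod]
  rw [h1, h2, mul_comm]

end DiamWreath

/-- For an odd prime `p` and `W = C₂ ≀ C_p`: for every generating set `X` of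
`W`, every element of `W` is a word of length at most `20(p-1)` in
`X ∪ X⁻¹`, i.e. every Cayley graph of `W` has diameter at most `20(p-1)`.
Since `|W| = p·2^p`, the worst diameter of `W` is `O(log |W|)`. -/
theorem diam_wreath_le (p : ℕ) (hp : p.Prime) (hodd : Odd p) :
    (∀ X : Set (Wreath p), Subgroup.closure X = ⊤ →
      ∀ g : Wreath p, ∃ l : List (Wreath p),
        (∀ x ∈ l, x ∈ X ∨ x⁻¹ ∈ X) ∧
        l.length ≤ 20 * (p - 1) ∧
        l.prod = g) ∧
    Nat.card (Wreath p) = p * 2 ^ p := by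
  haveI : Fact p.Prime := ⟨hp⟩
  haveI : NeZero p := ⟨hp.pos.ne'⟩
  haveI : Fact (1 < p) := ⟨hp.one_lt⟩
  constructor
  · intro X hX g
    obtain ⟨l, h1, h2, h3⟩ := DiamWreath.main_word hodd X hX g
    refine ⟨l, h1, le_trans h2 ?_, h3⟩
    have := hp.two_le
    omega
  · exact DiamWreath.card_wreath p
end
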